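/- arXiv:1702.08213 — 3 statements merged into one kernel-verified Lean document; each statement's English description precedes it below -/
import Mathlib

section
/- For every x₀ ∈ E₁ and every φ = (x̂, ŷ) ∈ C_β^−(E₁ × E₂), the function I^ε_{x₀}(φ) again belongs to C_β^−(E₁ × E₂) (in particular all the integrals defining it converge), and there exists a constant C₃ ≥ 0, independent of φ, such that ‖I^ε_{x₀}(φ)‖_{C_β^−} ≤ ρ(ε)·‖φ‖_{C_β^−} + C₃. -/
open MeasureTheory Real Filter

noncomputable section

set_option synthInstance.maxHeartbeats 1000000
set_option maxHeartbeats 2000000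

namespace LPaux

instance ratNormedAlgebraCLM {E : Type*} [NormedAddCommGroup E] [NormedSpace ℝ E] :
    NormedAlgebra ℚ (E →L[ℝ] E) :=
  NormedAlgebra.restrictScalars ℚ ℝ _


lemma integral_exp_mul_ab (c a b : ℝ) (hc : c ≠ 0) :
    ∫ x in a..b, Real.exp (c * x) = (Real.exp (c * b) - Real.exp (c * a)) / c := by
  rw [intervalIntegral.integral_comp_mul_left Real.exp hc, integral_exp]
  rw [smul_eq_mul]; ring

lemma exp_mul_intervalIntegrable (c a b : ℝ) :
    IntervalIntegrable (fun x => Real.exp (c * x)) volume a b :=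
  (Real.continuous_exp.comp (continuous_const.mul continuous_id)).intervalIntegrable a b

lemma exp_mul_integrableOn_Iic {c : ℝ} (hc : 0 < c) (b : ℝ) :
    IntegrableOn (fun x => Real.exp (c * x)) (Set.Iic b) := by
  refine integrableOn_Iic_of_intervalIntegral_norm_bounded (Real.exp (c * b) / c) b
    (fun i => (exp_mul_intervalIntegrable c i b).1) tendsto_id
    (Filter.Eventually.of_forall fun y => ?_)
  simp_rw [Real.norm_eq_abs, abs_of_nonneg (Real.exp_pos _).le]
  rw [integral_exp_mul_ab c y b hc.ne']
  have := (Real.exp_pos (c * y)).le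
  rw [div_le_div_iff_of_pos_right hc]
  linarith

lemma exp_mul_integral_Iic {c : ℝ} (hc : 0 < c) (b : ℝ) :
    ∫ x in Set.Iic b, Real.exp (c * x) = Real.exp (c * b) / c := by
  refine tendsto_nhds_unique
    (intervalIntegral_tendsto_integral_Iic _ (exp_mul_integrableOn_Iic hc b) tendsto_id) ?_
  simp_rw [fun y => integral_exp_mul_ab c y b hc.ne']
  have h1 : Tendsto (fun y : ℝ => Real.exp (c * y)) atBot (nhds 0) := by
    apply Real.tendsto_exp_atBot.comp
    exact (tendsto_const_mul_atBot_of_pos hc).mpr tendsto_id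
  have h2 : Tendsto (fun y : ℝ => (Real.exp (c * b) - Real.exp (c * y)) / c) atBot
      (nhds ((Real.exp (c * b) - 0) / c)) :=
    (Tendsto.sub tendsto_const_nhds h1).div_const c
  simpa using h2

lemma bounded_on_compact {E : Type*} [NormedAddCommGroup E] (f : ℝ → E) (hf : Continuous f)
    (r : ℝ) : ∃ C, 0 ≤ C ∧ ∀ s : ℝ, |s| ≤ r → ‖f s‖ ≤ C := by
  obtain ⟨C, hC⟩ := (isCompact_Icc (a := -r) (b := r)).bddAbove_image
    (hf.norm.continuousOn)
  refine ⟨max C 0, le_max_right _ _, fun s hs => ?_⟩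
  have : ‖f s‖ ∈ (fun s => ‖f s‖) '' Set.Icc (-r) r :=
    Set.mem_image_of_mem _ (abs_le.mp hs |> fun h => Set.mem_Icc.mpr ⟨h.1, h.2⟩)
  exact (hC this).trans (le_max_left _ _)

lemma meas_comp {E₁ E₂ E₃ : Type*}
    [NormedAddCommGroup E₁] [NormedSpace ℝ E₁] [FiniteDimensional ℝ E₁] [MeasurableSpace E₁] [BorelSpace E₁]
    [NormedAddCommGroup E₂] [NormedSpace ℝ E₂] [FiniteDimensional ℝ E₂] [MeasurableSpace E₂] [BorelSpace E₂]
    [NormedAddCommGroup E₃] [NormedSpace ℝ E₃] [MeasurableSpace E₃] [BorelSpace E₃]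
    (g : ℝ → E₁ → E₂ → E₃) (K : ℝ)
    (hgm : ∀ x y, Measurable fun t => g t x y)
    (hgl : ∀ t x₁ y₁ x₂ y₂, ‖g t x₁ y₁ - g t x₂ y₂‖ ≤ K * (‖x₁ - x₂‖ + ‖y₁ - y₂‖))
    {x : ℝ → E₁} {y : ℝ → E₂} (hx : Continuous x) (hy : Continuous y) :
    Measurable fun s => g s (x s) (y s) := by
  have hcont : ∀ t : ℝ, Continuous fun p : E₁ × E₂ => g t p.1 p.2 := by
    intro t
    rw [Metric.continuous_iff]
    intro p δ hδ
    rcases le_or_gt K 0 with hK | hK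
    · exact ⟨1, one_pos, fun q _ => by
        rw [dist_eq_norm]
        have h0 := hgl t q.1 q.2 p.1 p.2
        have h1 : ‖g t q.1 q.2 - g t p.1 p.2‖ ≤ 0 :=
          h0.trans (mul_nonpos_of_nonpos_of_nonneg hK (by positivity))
        have h2 : ‖g t q.1 q.2 - g t p.1 p.2‖ = 0 := le_antisymm h1 (norm_nonneg _)
        simpa [h2] using hδ⟩
    · refine ⟨δ / (2 * K + 1), by positivity, fun q hq => ?_⟩
      rw [dist_eq_norm]
      have h0 := hgl t q.1 q.2 p.1 p.2
      have h1 : ‖q.1 - p.1‖ ≤ dist q p := by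
        rw [dist_eq_norm, Prod.norm_def]; exact le_max_left _ _
      have h2 : ‖q.2 - p.2‖ ≤ dist q p := by
        rw [dist_eq_norm, Prod.norm_def]; exact le_max_right _ _
      have h3 : K * (‖q.1 - p.1‖ + ‖q.2 - p.2‖) ≤ K * (2 * dist q p) :=
        mul_le_mul_of_nonneg_left (by linarith) hK.le
      calc ‖g t q.1 q.2 - g t p.1 p.2‖ ≤ K * (2 * dist q p) := h0.trans h3
        _ < δ := by
            have hd : dist q p < δ / (2 * K + 1) := hq
            have hd0 : (0:ℝ) ≤ dist q p := dist_nonneg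
            rw [lt_div_iff₀ (by linarith)] at hd
            nlinarith
  have hmeas : Measurable (Function.uncurry fun (p : E₁ × E₂) (t : ℝ) => g t p.1 p.2) :=
    measurable_uncurry_of_continuous_of_measurable (fun t => hcont t) (fun p => hgm p.1 p.2)
  exact hmeas.comp (Measurable.prodMk (hx.prodMk hy).measurable measurable_id)

lemma sm_apply {E E' : Type*}
    [NormedAddCommGroup E] [NormedSpace ℝ E]
    [NormedAddCommGroup E'] [NormedSpace ℝ E']
    (A : ℝ → E →L[ℝ] E') (v : ℝ → E) (hA : Continuous A) (hv : StronglyMeasurable v) :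
    StronglyMeasurable fun s => A s (v s) :=
  isBoundedBilinearMap_apply.continuous.comp_stronglyMeasurable
    (hA.stronglyMeasurable.prodMk hv)

lemma exp_smul_continuous {E : Type*} [NormedAddCommGroup E] [NormedSpace ℝ E]
    [CompleteSpace E] (S : E →L[ℝ] E) (c : ℝ) :
    Continuous fun t : ℝ => NormedSpace.exp ((c * t) • S) :=
  NormedSpace.exp_continuous.comp ((continuous_const.mul continuous_id).smul continuous_const)

lemma exp_smul_split {E : Type*} [NormedAddCommGroup E] [NormedSpace ℝ E]
    [CompleteSpace E] (S : E →L[ℝ] E) (a b : ℝ) :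
    NormedSpace.exp ((a + b) • S) = NormedSpace.exp (a • S) * NormedSpace.exp (b • S) := by
  rw [← NormedSpace.exp_add_of_commute (((Commute.refl S).smul_left a).smul_right b)]
  rw [add_smul]

lemma intervalIntegrable_of_bound {E : Type*} [NormedAddCommGroup E]
    (f : ℝ → E) (hf : AEStronglyMeasurable f volume)
    (h : ∀ r : ℝ, ∃ C, ∀ s : ℝ, |s| ≤ r → ‖f s‖ ≤ C) (a b : ℝ) :
    IntervalIntegrable f volume a b := by
  rw [intervalIntegrable_iff]
  obtain ⟨C, hC⟩ := h (max |a| |b|)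
  refine Measure.integrableOn_of_bounded (M := C) ?_ hf ?_
  · exact (measure_Ioc_lt_top).ne
  · filter_upwards [ae_restrict_mem measurableSet_Ioc] with s hs
    apply hC
    rcases Set.mem_Ioc.mp hs with ⟨h1, h2⟩
    rw [abs_le]
    constructor
    · have : -(max |a| |b|) ≤ min a b := by
        have ha : -|a| ≤ a := neg_abs_le a
        have hb : -|b| ≤ b := neg_abs_le b
        rcases le_total a b with hab | hab
        · rw [min_eq_left hab]; exact le_trans (neg_le_neg (le_max_left _ _)) ha
        · rw [min_eq_right hab]; exact le_trans (neg_le_neg (le_max_right _ _)) hb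
      linarith
    · have : max a b ≤ max |a| |b| :=
        max_le_max (le_abs_self a) (le_abs_self b)
      linarith

end LPaux


/-- Weighted sup-norm `sup_{t ≤ 0} e^{-β t} ‖φ t‖` on `(-∞,0]`. -/
def negNorm {E : Type*} [NormedAddCommGroup E] (β : ℝ) (φ : ℝ → E) : ℝ :=
  ⨆ t : Set.Iic (0 : ℝ), Real.exp (-β * t.1) * ‖φ t.1‖

/-- Membership in the Banach space `C_β^-(E)` of continuous functions on `(-∞,0]`
with finite weighted sup-norm. -/
def MemCneg {E : Type*} [NormedAddCommGroup E] (β : ℝ) (φ : ℝ → E) : Prop :=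
  ContinuousOn φ (Set.Iic 0) ∧
    BddAbove (Set.range fun t : Set.Iic (0 : ℝ) => Real.exp (-β * t.1) * ‖φ t.1‖)

/-- Weighted sup-norm `sup_{t ≥ 0} e^{-β t} ‖φ t‖` on `[0,∞)`. -/
def posNorm {E : Type*} [NormedAddCommGroup E] (β : ℝ) (φ : ℝ → E) : ℝ :=
  ⨆ t : Set.Ici (0 : ℝ), Real.exp (-β * t.1) * ‖φ t.1‖

/-- Membership in the Banach space `C_β^+(E)` of continuous functions on `[0,∞)`
with finite weighted sup-norm. -/
def MemCpos {E : Type*} [NormedAddCommGroup E] (β : ℝ) (φ : ℝ → E) : Prop :=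
  ContinuousOn φ (Set.Ici 0) ∧
    BddAbove (Set.range fun t : Set.Ici (0 : ℝ) => Real.exp (-β * t.1) * ‖φ t.1‖)

variable {E₁ E₂ : Type*}
  [NormedAddCommGroup E₁] [NormedSpace ℝ E₁]
  [NormedAddCommGroup E₂] [NormedSpace ℝ E₂]

/-- Slow component of the Lyapunov–Perron operator `I^ε_{x₀}`. -/
def LPslow (S : E₁ →L[ℝ] E₁) (g1 : ℝ → E₁ → E₂ → E₁) (x0 : E₁)
    (x : ℝ → E₁) (y : ℝ → E₂) (t : ℝ) : E₁ :=
  NormedSpace.exp (t • S) x0 +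
    ∫ s in (0:ℝ)..t, NormedSpace.exp ((t - s) • S) (g1 s (x s) (y s))

/-- Fast component of the Lyapunov–Perron operator `I^ε_{x₀}`. -/
def LPfast (F : E₂ →L[ℝ] E₂) (g2 : ℝ → E₁ → E₂ → E₂) (ε : ℝ)
    (x : ℝ → E₁) (y : ℝ → E₂) (t : ℝ) : E₂ :=
  (1/ε) • ∫ s in Set.Iic t, NormedSpace.exp (((t - s)/ε) • F) (g2 s (x s) (y s))

/-- The Lyapunov–Perron operator maps `C_β^-` into itself, its defining
integrals converge, and `‖I^ε_{x₀}(φ)‖ ≤ ρ(ε) ‖φ‖ + C₃` with `C₃` independent of `φ`. -/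
theorem lyapunovPerron_maps_into_and_bound
    {E₁ E₂ : Type*}
    [NormedAddCommGroup E₁] [NormedSpace ℝ E₁] [FiniteDimensional ℝ E₁] [MeasurableSpace E₁] [BorelSpace E₁]
    [NormedAddCommGroup E₂] [NormedSpace ℝ E₂] [FiniteDimensional ℝ E₂] [MeasurableSpace E₂] [BorelSpace E₂]
    (S : E₁ →L[ℝ] E₁) (F : E₂ →L[ℝ] E₂)
    (γs γf γ K ε : ℝ)
    (hγs : 0 < γs) (hγf : γf < 0) (hγ : 0 < γ) (hK : 0 < K)
    (hgap : K < -(γ + γf)) (hε : 0 < ε)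
    (hS : ∀ t ≤ (0:ℝ), ∀ x : E₁, ‖NormedSpace.exp (t • S) x‖ ≤ Real.exp (γs * t) * ‖x‖)
    (hF : ∀ t ≥ (0:ℝ), ∀ y : E₂, ‖NormedSpace.exp (t • F) y‖ ≤ Real.exp (γf * t) * ‖y‖)
    (g1 : ℝ → E₁ → E₂ → E₁) (g2 : ℝ → E₁ → E₂ → E₂)
    (hg1m : ∀ x y, Measurable fun t => g1 t x y)
    (hg2m : ∀ x y, Measurable fun t => g2 t x y)
    (hg1b : ∀ x y r, ∃ M, ∀ t : ℝ, |t| ≤ r → ‖g1 t x y‖ ≤ M)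
    (hg2b : ∀ x y r, ∃ M, ∀ t : ℝ, |t| ≤ r → ‖g2 t x y‖ ≤ M)
    (hg1l : ∀ t x₁ y₁ x₂ y₂, ‖g1 t x₁ y₁ - g1 t x₂ y₂‖ ≤ K * (‖x₁ - x₂‖ + ‖y₁ - y₂‖))
    (hg2l : ∀ t x₁ y₁ x₂ y₂, ‖g2 t x₁ y₁ - g2 t x₂ y₂‖ ≤ K * (‖x₁ - x₂‖ + ‖y₁ - y₂‖))
    (hg0 : ∃ M, ∀ t ≤ (0:ℝ),
      Real.exp ((γ/ε) * t) * (‖g1 t 0 0‖ + ‖g2 t 0 0‖) ≤ M)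
    :
    ∀ x0 : E₁, ∃ C₃ : ℝ, 0 ≤ C₃ ∧
      ∀ (xh : ℝ → E₁) (yh : ℝ → E₂),
        MemCneg (-γ/ε) xh → MemCneg (-γ/ε) yh →
        (∀ t ≤ (0:ℝ), IntervalIntegrable
            (fun s => NormedSpace.exp ((t - s) • S) (g1 s (xh s) (yh s))) volume 0 t) ∧
        (∀ t ≤ (0:ℝ), IntegrableOn
            (fun s => NormedSpace.exp (((t - s)/ε) • F) (g2 s (xh s) (yh s))) (Set.Iic t)) ∧
        MemCneg (-γ/ε) (LPslow S g1 x0 xh yh) ∧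
        MemCneg (-γ/ε) (LPfast F g2 ε xh yh) ∧
        negNorm (-γ/ε) (LPslow S g1 x0 xh yh) + negNorm (-γ/ε) (LPfast F g2 ε xh yh) ≤
          (ε * K / (γ + ε * γs) - K / (γ + γf)) * (negNorm (-γ/ε) xh + negNorm (-γ/ε) yh) + C₃ := by
    intro x0
    obtain ⟨M₀, hM₀⟩ := hg0
    set M : ℝ := max M₀ 0 with hMdef
    have hM0 : 0 ≤ M := le_max_right _ _
    have hMb : ∀ t ≤ (0:ℝ), Real.exp ((γ/ε) * t) * (‖g1 t 0 0‖ + ‖g2 t 0 0‖) ≤ M :=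
      fun t ht => (hM₀ t ht).trans (le_max_left _ _)
    have hεne : (ε:ℝ) ≠ 0 := hε.ne'
    have hγε : 0 < γ / ε := div_pos hγ hε
    have hneg : (-(-γ/ε) : ℝ) = γ/ε := by ring
    set c1 : ℝ := γ / ε + γs with hc1def
    have hc1 : 0 < c1 := by rw [hc1def]; positivity
    have hden1 : 0 < γ + ε * γs := by positivity
    have hγγf : γ + γf < 0 := by linarith
    set μ : ℝ := -(γ + γf) / ε with hμdef
    have hμ : 0 < μ := by rw [hμdef]; exact div_pos (by linarith) hε
    set D : ℝ := ε / (γ + ε * γs) - 1 / (γ + γf) with hDdef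
    have hD : 0 ≤ D := by
      have h1 : 0 ≤ ε / (γ + ε*γs) := by positivity
      have h2 : 1 / (γ + γf) < 0 := div_neg_of_pos_of_neg one_pos hγγf
      rw [hDdef]; linarith
    refine ⟨‖x0‖ + M * D, add_nonneg (norm_nonneg _) (mul_nonneg hM0 hD), ?_⟩
    intro xh yh hx hy
    set Nx : ℝ := negNorm (-γ/ε) xh with hNxdef
    set Ny : ℝ := negNorm (-γ/ε) yh with hNydef
    have hNx' : ∀ s : ℝ, s ≤ 0 → Real.exp (-(-γ/ε) * s) * ‖xh s‖ ≤ Nx :=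
      fun s hs => le_ciSup hx.2 (⟨s, hs⟩ : Set.Iic (0:ℝ))
    have hNy' : ∀ s : ℝ, s ≤ 0 → Real.exp (-(-γ/ε) * s) * ‖yh s‖ ≤ Ny :=
      fun s hs => le_ciSup hy.2 (⟨s, hs⟩ : Set.Iic (0:ℝ))
    have hNx0 : 0 ≤ Nx := le_trans (by positivity) (hNx' 0 le_rfl)
    have hNy0 : 0 ≤ Ny := le_trans (by positivity) (hNy' 0 le_rfl)
    have hee : ∀ s : ℝ, Real.exp (-(γ/ε)*s) * Real.exp ((γ/ε)*s) = 1 := by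
      intro s; rw [← Real.exp_add, show -(γ/ε)*s + (γ/ε)*s = 0 by ring, Real.exp_zero]
    have hNx : ∀ s : ℝ, s ≤ 0 → ‖xh s‖ ≤ Nx * Real.exp (-(γ/ε) * s) := by
      intro s hs
      have h' := hNx' s hs
      rw [hneg] at h'
      have hmul := mul_le_mul_of_nonneg_left h' (Real.exp_pos (-(γ/ε)*s)).le
      rw [← mul_assoc, hee s, one_mul] at hmul
      linarith [hmul, mul_comm (Real.exp (-(γ/ε)*s)) Nx]
    have hNy : ∀ s : ℝ, s ≤ 0 → ‖yh s‖ ≤ Ny * Real.exp (-(γ/ε) * s) := by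
      intro s hs
      have h' := hNy' s hs
      rw [hneg] at h'
      have hmul := mul_le_mul_of_nonneg_left h' (Real.exp_pos (-(γ/ε)*s)).le
      rw [← mul_assoc, hee s, one_mul] at hmul
      linarith [hmul, mul_comm (Real.exp (-(γ/ε)*s)) Ny]
    set A : ℝ := M + K * (Nx + Ny) with hAdef
    have hA0 : 0 ≤ A := by
      rw [hAdef]; exact add_nonneg hM0 (mul_nonneg hK.le (add_nonneg hNx0 hNy0))
    -- bound on ‖g i s 0 0‖
    have hg00 : ∀ s : ℝ, s ≤ 0 →
        ‖g1 s 0 0‖ + ‖g2 s 0 0‖ ≤ M * Real.exp (-(γ/ε)*s) := by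
      intro s hs
      have h := hMb s hs
      have h2 := mul_le_mul_of_nonneg_left h (Real.exp_pos (-(γ/ε)*s)).le
      rw [← mul_assoc, hee s, one_mul] at h2
      linarith [h2, mul_comm (Real.exp (-(γ/ε)*s)) M]
    have hg1p : ∀ s : ℝ, s ≤ 0 →
        ‖g1 s (xh s) (yh s)‖ ≤ A * Real.exp (-(γ/ε) * s) := by
      intro s hs
      have hl := hg1l s (xh s) (yh s) 0 0
      simp only [sub_zero, norm_zero] at hl
      have htri : ‖g1 s (xh s) (yh s)‖ ≤ ‖g1 s (xh s) (yh s) - g1 s 0 0‖ + ‖g1 s 0 0‖ := by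
        have h := norm_add_le (g1 s (xh s) (yh s) - g1 s 0 0) (g1 s 0 0)
        simpa using h
      have h0 := hg00 s hs
      have hxs := hNx s hs; have hys := hNy s hs
      have hKb : K * (‖xh s‖ + ‖yh s‖) ≤ K * (Nx + Ny) * Real.exp (-(γ/ε)*s) := by
        have hsum : ‖xh s‖ + ‖yh s‖ ≤ (Nx + Ny) * Real.exp (-(γ/ε)*s) := by
          rw [add_mul]; exact add_le_add hxs hys
        calc K * (‖xh s‖ + ‖yh s‖) ≤ K * ((Nx + Ny) * Real.exp (-(γ/ε)*s)) :=
              mul_le_mul_of_nonneg_left hsum hK.le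
          _ = K * (Nx + Ny) * Real.exp (-(γ/ε)*s) := by ring
      have hg1z : ‖g1 s 0 0‖ ≤ M * Real.exp (-(γ/ε)*s) :=
        le_trans (by linarith [norm_nonneg (g2 s 0 0)]) h0
      calc ‖g1 s (xh s) (yh s)‖ ≤ ‖g1 s (xh s) (yh s) - g1 s 0 0‖ + ‖g1 s 0 0‖ := htri
        _ ≤ K * (Nx + Ny) * Real.exp (-(γ/ε)*s) + M * Real.exp (-(γ/ε)*s) :=
            add_le_add (hl.trans hKb) hg1z
        _ = A * Real.exp (-(γ/ε)*s) := by rw [hAdef]; ring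
    have hg2p : ∀ s : ℝ, s ≤ 0 →
        ‖g2 s (xh s) (yh s)‖ ≤ A * Real.exp (-(γ/ε) * s) := by
      intro s hs
      have hl := hg2l s (xh s) (yh s) 0 0
      simp only [sub_zero, norm_zero] at hl
      have htri : ‖g2 s (xh s) (yh s)‖ ≤ ‖g2 s (xh s) (yh s) - g2 s 0 0‖ + ‖g2 s 0 0‖ := by
        have h := norm_add_le (g2 s (xh s) (yh s) - g2 s 0 0) (g2 s 0 0)
        simpa using h
      have h0 := hg00 s hs
      have hxs := hNx s hs; have hys := hNy s hs
      have hKb : K * (‖xh s‖ + ‖yh s‖) ≤ K * (Nx + Ny) * Real.exp (-(γ/ε)*s) := by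
        have hsum : ‖xh s‖ + ‖yh s‖ ≤ (Nx + Ny) * Real.exp (-(γ/ε)*s) := by
          rw [add_mul]; exact add_le_add hxs hys
        calc K * (‖xh s‖ + ‖yh s‖) ≤ K * ((Nx + Ny) * Real.exp (-(γ/ε)*s)) :=
              mul_le_mul_of_nonneg_left hsum hK.le
          _ = K * (Nx + Ny) * Real.exp (-(γ/ε)*s) := by ring
      have hg2z : ‖g2 s 0 0‖ ≤ M * Real.exp (-(γ/ε)*s) :=
        le_trans (by linarith [norm_nonneg (g1 s 0 0)]) h0
      calc ‖g2 s (xh s) (yh s)‖ ≤ ‖g2 s (xh s) (yh s) - g2 s 0 0‖ + ‖g2 s 0 0‖ := htri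
        _ ≤ K * (Nx + Ny) * Real.exp (-(γ/ε)*s) + M * Real.exp (-(γ/ε)*s) :=
            add_le_add (hl.trans hKb) hg2z
        _ = A * Real.exp (-(γ/ε)*s) := by rw [hAdef]; ring
    -- continuous substitutes
    set xc : ℝ → E₁ := fun s => xh (min s 0) with hxcdef
    set yc : ℝ → E₂ := fun s => yh (min s 0) with hycdef
    have hxcc : Continuous xc :=
      hx.1.comp_continuous (continuous_id.min continuous_const) (fun s => min_le_right s 0)
    have hycc : Continuous yc :=
      hy.1.comp_continuous (continuous_id.min continuous_const) (fun s => min_le_right s 0)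
    set G1 : ℝ → E₁ := fun s => g1 s (xc s) (yc s) with hG1def
    set G2 : ℝ → E₂ := fun s => g2 s (xc s) (yc s) with hG2def
    have hG1sm : StronglyMeasurable G1 :=
      (LPaux.meas_comp g1 K hg1m hg1l hxcc hycc).stronglyMeasurable
    have hG2sm : StronglyMeasurable G2 :=
      (LPaux.meas_comp g2 K hg2m hg2l hxcc hycc).stronglyMeasurable
    have hG1e : ∀ s : ℝ, s ≤ 0 → G1 s = g1 s (xh s) (yh s) := by
      intro s hs
      simp only [hG1def, hxcdef, hycdef, min_eq_left hs]
    have hG2e : ∀ s : ℝ, s ≤ 0 → G2 s = g2 s (xh s) (yh s) := by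
      intro s hs
      simp only [hG2def, hxcdef, hycdef, min_eq_left hs]
    have hG1p : ∀ s : ℝ, s ≤ 0 → ‖G1 s‖ ≤ A * Real.exp (-(γ/ε)*s) :=
      fun s hs => (hG1e s hs) ▸ hg1p s hs
    have hG2p : ∀ s : ℝ, s ≤ 0 → ‖G2 s‖ ≤ A * Real.exp (-(γ/ε)*s) :=
      fun s hs => (hG2e s hs) ▸ hg2p s hs
    have hG1loc : ∀ r : ℝ, ∃ C, ∀ s : ℝ, |s| ≤ r → ‖G1 s‖ ≤ C := by
      intro r
      obtain ⟨Cg, hCg⟩ := hg1b 0 0 r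
      obtain ⟨Cx, _, hCx⟩ := LPaux.bounded_on_compact xc hxcc r
      obtain ⟨Cy, _, hCy⟩ := LPaux.bounded_on_compact yc hycc r
      refine ⟨Cg + K * (Cx + Cy), fun s hs => ?_⟩
      have hl := hg1l s (xc s) (yc s) 0 0
      simp only [sub_zero, norm_zero] at hl
      have htri : ‖g1 s (xc s) (yc s)‖ ≤ ‖g1 s (xc s) (yc s) - g1 s 0 0‖ + ‖g1 s 0 0‖ := by
        have h := norm_add_le (g1 s (xc s) (yc s) - g1 s 0 0) (g1 s 0 0)
        simpa using h
      have h1 := hCx s hs; have h2 := hCy s hs; have h3 := hCg s hs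
      have h4 : K * (‖xc s‖ + ‖yc s‖) ≤ K * (Cx + Cy) :=
        mul_le_mul_of_nonneg_left (by linarith) hK.le
      calc ‖G1 s‖ ≤ ‖g1 s (xc s) (yc s) - g1 s 0 0‖ + ‖g1 s 0 0‖ := htri
        _ ≤ K * (Cx + Cy) + Cg := add_le_add (hl.trans h4) h3
        _ = Cg + K * (Cx + Cy) := by ring
    have hG2loc : ∀ r : ℝ, ∃ C, ∀ s : ℝ, |s| ≤ r → ‖G2 s‖ ≤ C := by
      intro r
      obtain ⟨Cg, hCg⟩ := hg2b 0 0 r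
      obtain ⟨Cx, _, hCx⟩ := LPaux.bounded_on_compact xc hxcc r
      obtain ⟨Cy, _, hCy⟩ := LPaux.bounded_on_compact yc hycc r
      refine ⟨Cg + K * (Cx + Cy), fun s hs => ?_⟩
      have hl := hg2l s (xc s) (yc s) 0 0
      simp only [sub_zero, norm_zero] at hl
      have htri : ‖g2 s (xc s) (yc s)‖ ≤ ‖g2 s (xc s) (yc s) - g2 s 0 0‖ + ‖g2 s 0 0‖ := by
        have h := norm_add_le (g2 s (xc s) (yc s) - g2 s 0 0) (g2 s 0 0)
        simpa using h
      have h1 := hCx s hs; have h2 := hCy s hs; have h3 := hCg s hs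
      have h4 : K * (‖xc s‖ + ‖yc s‖) ≤ K * (Cx + Cy) :=
        mul_le_mul_of_nonneg_left (by linarith) hK.le
      calc ‖G2 s‖ ≤ ‖g2 s (xc s) (yc s) - g2 s 0 0‖ + ‖g2 s 0 0‖ := htri
        _ ≤ K * (Cx + Cy) + Cg := add_le_add (hl.trans h4) h3
        _ = Cg + K * (Cx + Cy) := by ring
    -- slow interval integrability
    have hSlowInt : ∀ t ≤ (0:ℝ), IntervalIntegrable
        (fun s => NormedSpace.exp ((t - s) • S) (g1 s (xh s) (yh s))) volume 0 t := by
      intro t ht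
      have hsm : StronglyMeasurable fun s => NormedSpace.exp ((t - s) • S) (G1 s) :=
        LPaux.sm_apply _ _ (NormedSpace.exp_continuous.comp
          ((continuous_const.sub continuous_id).smul continuous_const)) hG1sm
      rw [intervalIntegrable_iff, Set.uIoc_of_ge ht]
      have hInt : IntegrableOn (fun s => NormedSpace.exp ((t - s) • S) (G1 s)) (Set.Ioc t 0) := by
        refine Measure.integrableOn_of_bounded (M := A * Real.exp (-(γ/ε)*t))
          (measure_Ioc_lt_top).ne hsm.aestronglyMeasurable ?_
        filter_upwards [ae_restrict_mem measurableSet_Ioc] with s hs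
        obtain ⟨hts, hs0⟩ := Set.mem_Ioc.mp hs
        have h1 : ‖NormedSpace.exp ((t - s) • S) (G1 s)‖ ≤ Real.exp (γs*(t-s)) * ‖G1 s‖ :=
          hS (t-s) (by linarith) _
        have h2 : Real.exp (γs*(t-s)) ≤ 1 := by
          rw [Real.exp_le_one_iff]
          exact mul_nonpos_of_nonneg_of_nonpos hγs.le (by linarith)
        have h3 : ‖G1 s‖ ≤ A * Real.exp (-(γ/ε)*s) := hG1p s hs0
        have h4 : Real.exp (-(γ/ε)*s) ≤ Real.exp (-(γ/ε)*t) := by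
          apply Real.exp_le_exp.mpr
          have := mul_le_mul_of_nonneg_left hts.le hγε.le
          linarith
        calc ‖NormedSpace.exp ((t - s) • S) (G1 s)‖
            ≤ Real.exp (γs*(t-s)) * ‖G1 s‖ := h1
          _ ≤ 1 * (A * Real.exp (-(γ/ε)*s)) :=
              mul_le_mul h2 h3 (norm_nonneg _) zero_le_one
          _ ≤ A * Real.exp (-(γ/ε)*t) := by
              rw [one_mul]; exact mul_le_mul_of_nonneg_left h4 hA0
      exact hInt.congr_fun (fun s hs => by beta_reduce; rw [hG1e s hs.2]) measurableSet_Ioc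
    -- fast integrability
    have hFastInt : ∀ t ≤ (0:ℝ), IntegrableOn
        (fun s => NormedSpace.exp (((t - s)/ε) • F) (g2 s (xh s) (yh s))) (Set.Iic t) := by
      intro t ht
      have hsm : StronglyMeasurable fun s => NormedSpace.exp (((t - s)/ε) • F) (G2 s) :=
        LPaux.sm_apply _ _ (NormedSpace.exp_continuous.comp
          (((continuous_const.sub continuous_id).div_const ε).smul continuous_const)) hG2sm
      have hdom : IntegrableOn
          (fun s => (A * Real.exp ((γf/ε)*t)) * Real.exp (μ * s)) (Set.Iic t) :=
        (LPaux.exp_mul_integrableOn_Iic hμ t).const_mul _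
      have hptwise : ∀ s : ℝ, s ≤ t →
          ‖NormedSpace.exp (((t - s)/ε) • F) (G2 s)‖
            ≤ (A * Real.exp ((γf/ε)*t)) * Real.exp (μ * s) := by
        intro s hst
        have h1 : ‖NormedSpace.exp (((t - s)/ε) • F) (G2 s)‖
            ≤ Real.exp (γf*((t-s)/ε)) * ‖G2 s‖ :=
          hF ((t-s)/ε) (div_nonneg (by linarith) hε.le) _
        have h3 : ‖G2 s‖ ≤ A * Real.exp (-(γ/ε)*s) := hG2p s (hst.trans ht)
        have key : Real.exp (γf*((t-s)/ε)) * (A * Real.exp (-(γ/ε)*s))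
            = (A * Real.exp ((γf/ε)*t)) * Real.exp (μ*s) := by
          have hexp : Real.exp (γf*((t-s)/ε)) * Real.exp (-(γ/ε)*s)
              = Real.exp ((γf/ε)*t) * Real.exp (μ*s) := by
            rw [← Real.exp_add, ← Real.exp_add]
            congr 1
            rw [hμdef]
            field_simp
            ring
          calc Real.exp (γf*((t-s)/ε)) * (A * Real.exp (-(γ/ε)*s))
              = A * (Real.exp (γf*((t-s)/ε)) * Real.exp (-(γ/ε)*s)) := by ring
            _ = A * (Real.exp ((γf/ε)*t) * Real.exp (μ*s)) := by rw [hexp]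
            _ = (A * Real.exp ((γf/ε)*t)) * Real.exp (μ*s) := by ring
        calc ‖NormedSpace.exp (((t - s)/ε) • F) (G2 s)‖
            ≤ Real.exp (γf*((t-s)/ε)) * ‖G2 s‖ := h1
          _ ≤ Real.exp (γf*((t-s)/ε)) * (A * Real.exp (-(γ/ε)*s)) :=
              mul_le_mul_of_nonneg_left h3 (Real.exp_pos _).le
          _ = (A * Real.exp ((γf/ε)*t)) * Real.exp (μ*s) := key
      have hInt : IntegrableOn (fun s => NormedSpace.exp (((t - s)/ε) • F) (G2 s)) (Set.Iic t) := by
        refine Integrable.mono' hdom hsm.aestronglyMeasurable ?_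
        filter_upwards [ae_restrict_mem measurableSet_Iic] with s hs
        exact hptwise s hs
      exact hInt.congr_fun (fun s hs => by beta_reduce; rw [hG2e s (le_trans hs ht)]) measurableSet_Iic
    -- slow weighted bound
    have hslowb : ∀ t : ℝ, t ≤ 0 →
        Real.exp ((γ/ε)*t) * ‖LPslow S g1 x0 xh yh t‖ ≤ ‖x0‖ + A / c1 := by
      intro t ht
      have hfi := hSlowInt t ht
      have hfi' : IntervalIntegrable
          (fun s => NormedSpace.exp ((t - s) • S) (g1 s (xh s) (yh s))) volume t 0 := hfi.symm
      have hBint : IntervalIntegrable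
          (fun s => (A * Real.exp (γs*t)) * Real.exp (-c1*s)) volume t 0 :=
        (LPaux.exp_mul_intervalIntegrable (-c1) t 0).const_mul _
      have hpt : ∀ s ∈ Set.Icc t 0,
          ‖NormedSpace.exp ((t - s) • S) (g1 s (xh s) (yh s))‖
            ≤ (A * Real.exp (γs*t)) * Real.exp (-c1*s) := by
        intro s hs
        obtain ⟨hts, hs0⟩ := hs
        have h1 : ‖NormedSpace.exp ((t - s) • S) (g1 s (xh s) (yh s))‖
            ≤ Real.exp (γs*(t-s)) * ‖g1 s (xh s) (yh s)‖ := hS (t-s) (by linarith) _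
        have h3 := hg1p s hs0
        have key : Real.exp (γs*(t-s)) * (A * Real.exp (-(γ/ε)*s))
            = (A * Real.exp (γs*t)) * Real.exp (-c1*s) := by
          have hexp : Real.exp (γs*(t-s)) * Real.exp (-(γ/ε)*s)
              = Real.exp (γs*t) * Real.exp (-c1*s) := by
            rw [← Real.exp_add, ← Real.exp_add]
            congr 1
            rw [hc1def]; ring
          calc Real.exp (γs*(t-s)) * (A * Real.exp (-(γ/ε)*s))
              = A * (Real.exp (γs*(t-s)) * Real.exp (-(γ/ε)*s)) := by ring
            _ = A * (Real.exp (γs*t) * Real.exp (-c1*s)) := by rw [hexp]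
            _ = (A * Real.exp (γs*t)) * Real.exp (-c1*s) := by ring
        calc ‖NormedSpace.exp ((t - s) • S) (g1 s (xh s) (yh s))‖
            ≤ Real.exp (γs*(t-s)) * ‖g1 s (xh s) (yh s)‖ := h1
          _ ≤ Real.exp (γs*(t-s)) * (A * Real.exp (-(γ/ε)*s)) :=
              mul_le_mul_of_nonneg_left h3 (Real.exp_pos _).le
          _ = (A * Real.exp (γs*t)) * Real.exp (-c1*s) := key
      have hIntNorm : ‖∫ s in (0:ℝ)..t, NormedSpace.exp ((t - s) • S) (g1 s (xh s) (yh s))‖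
          ≤ (A * Real.exp (γs*t)) * ((Real.exp (-c1*t) - 1)/c1) := by
        rw [intervalIntegral.integral_symm, norm_neg]
        calc ‖∫ s in t..(0:ℝ), NormedSpace.exp ((t - s) • S) (g1 s (xh s) (yh s))‖
            ≤ ∫ s in t..(0:ℝ), ‖NormedSpace.exp ((t - s) • S) (g1 s (xh s) (yh s))‖ :=
              intervalIntegral.norm_integral_le_integral_norm ht
          _ ≤ ∫ s in t..(0:ℝ), (A * Real.exp (γs*t)) * Real.exp (-c1*s) :=
              intervalIntegral.integral_mono_on ht hfi'.norm hBint hpt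
          _ = (A * Real.exp (γs*t)) * ((Real.exp (-c1*0) - Real.exp (-c1*t))/(-c1)) := by
              rw [intervalIntegral.integral_const_mul,
                LPaux.integral_exp_mul_ab (-c1) t 0 (neg_ne_zero.mpr hc1.ne')]
          _ = (A * Real.exp (γs*t)) * ((Real.exp (-c1*t) - 1)/c1) := by
              rw [mul_zero, Real.exp_zero, div_neg]; ring
      have hsum : ‖LPslow S g1 x0 xh yh t‖
          ≤ Real.exp (γs*t) * ‖x0‖ + (A * Real.exp (γs*t)) * ((Real.exp (-c1*t) - 1)/c1) := by
        refine le_trans (norm_add_le _ _) (add_le_add (hS t ht x0) hIntNorm)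
      have e1 : Real.exp ((γ/ε)*t) * Real.exp (γs*t) = Real.exp (c1*t) := by
        rw [← Real.exp_add]; congr 1; rw [hc1def]; ring
      have e2 : Real.exp (c1*t) * Real.exp (-c1*t) = 1 := by
        rw [← Real.exp_add, show c1*t + -c1*t = 0 by ring, Real.exp_zero]
      have e3 : Real.exp (c1*t) ≤ 1 := by
        rw [Real.exp_le_one_iff]
        exact mul_nonpos_of_nonneg_of_nonpos hc1.le ht
      have e4 : (0:ℝ) < Real.exp (c1*t) := Real.exp_pos _
      calc Real.exp ((γ/ε)*t) * ‖LPslow S g1 x0 xh yh t‖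
          ≤ Real.exp ((γ/ε)*t) *
            (Real.exp (γs*t) * ‖x0‖ + (A * Real.exp (γs*t)) * ((Real.exp (-c1*t) - 1)/c1)) :=
            mul_le_mul_of_nonneg_left hsum (Real.exp_pos _).le
        _ = (Real.exp ((γ/ε)*t) * Real.exp (γs*t)) * ‖x0‖
            + A * ((Real.exp ((γ/ε)*t) * Real.exp (γs*t)) * Real.exp (-c1*t)
              - (Real.exp ((γ/ε)*t) * Real.exp (γs*t))) / c1 := by ring
        _ = Real.exp (c1*t) * ‖x0‖ + A * (1 - Real.exp (c1*t)) / c1 := by rw [e1, e2]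
        _ ≤ ‖x0‖ + A / c1 := by
            have hp1 : Real.exp (c1*t) * ‖x0‖ ≤ ‖x0‖ :=
              mul_le_of_le_one_left (norm_nonneg _) e3
            have hp2 : A * (1 - Real.exp (c1*t)) / c1 ≤ A / c1 := by
              apply div_le_div_of_nonneg_right ?_ hc1.le
              nlinarith
            exact add_le_add hp1 hp2
    -- fast weighted bound
    have hfastb : ∀ t : ℝ, t ≤ 0 →
        Real.exp ((γ/ε)*t) * ‖LPfast F g2 ε xh yh t‖ ≤ A / (ε * μ) := by
      intro t ht
      have hfi := hFastInt t ht
      have hdom : IntegrableOn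
          (fun s => (A * Real.exp ((γf/ε)*t)) * Real.exp (μ * s)) (Set.Iic t) :=
        (LPaux.exp_mul_integrableOn_Iic hμ t).const_mul _
      have hpt : ∀ s ∈ Set.Iic t,
          ‖NormedSpace.exp (((t - s)/ε) • F) (g2 s (xh s) (yh s))‖
            ≤ (A * Real.exp ((γf/ε)*t)) * Real.exp (μ * s) := by
        intro s hst
        have h1 : ‖NormedSpace.exp (((t - s)/ε) • F) (g2 s (xh s) (yh s))‖
            ≤ Real.exp (γf*((t-s)/ε)) * ‖g2 s (xh s) (yh s)‖ :=
          hF ((t-s)/ε) (div_nonneg (by linarith [Set.mem_Iic.mp hst]) hε.le) _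
        have h3 := hg2p s ((Set.mem_Iic.mp hst).trans ht)
        have key : Real.exp (γf*((t-s)/ε)) * (A * Real.exp (-(γ/ε)*s))
            = (A * Real.exp ((γf/ε)*t)) * Real.exp (μ*s) := by
          have hexp : Real.exp (γf*((t-s)/ε)) * Real.exp (-(γ/ε)*s)
              = Real.exp ((γf/ε)*t) * Real.exp (μ*s) := by
            rw [← Real.exp_add, ← Real.exp_add]
            congr 1
            rw [hμdef]; field_simp; ring
          calc Real.exp (γf*((t-s)/ε)) * (A * Real.exp (-(γ/ε)*s))
              = A * (Real.exp (γf*((t-s)/ε)) * Real.exp (-(γ/ε)*s)) := by ring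
            _ = A * (Real.exp ((γf/ε)*t) * Real.exp (μ*s)) := by rw [hexp]
            _ = (A * Real.exp ((γf/ε)*t)) * Real.exp (μ*s) := by ring
        calc ‖NormedSpace.exp (((t - s)/ε) • F) (g2 s (xh s) (yh s))‖
            ≤ Real.exp (γf*((t-s)/ε)) * ‖g2 s (xh s) (yh s)‖ := h1
          _ ≤ Real.exp (γf*((t-s)/ε)) * (A * Real.exp (-(γ/ε)*s)) :=
              mul_le_mul_of_nonneg_left h3 (Real.exp_pos _).le
          _ = (A * Real.exp ((γf/ε)*t)) * Real.exp (μ*s) := key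
      have hIntNorm : ‖∫ s in Set.Iic t, NormedSpace.exp (((t - s)/ε) • F) (g2 s (xh s) (yh s))‖
          ≤ (A * Real.exp ((γf/ε)*t)) * (Real.exp (μ*t)/μ) := by
        calc ‖∫ s in Set.Iic t, NormedSpace.exp (((t - s)/ε) • F) (g2 s (xh s) (yh s))‖
            ≤ ∫ s in Set.Iic t, ‖NormedSpace.exp (((t - s)/ε) • F) (g2 s (xh s) (yh s))‖ :=
              norm_integral_le_integral_norm _
          _ ≤ ∫ s in Set.Iic t, (A * Real.exp ((γf/ε)*t)) * Real.exp (μ * s) :=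
              setIntegral_mono_on hfi.norm hdom measurableSet_Iic hpt
          _ = (A * Real.exp ((γf/ε)*t)) * ∫ s in Set.Iic t, Real.exp (μ * s) :=
              integral_const_mul _ _
          _ = (A * Real.exp ((γf/ε)*t)) * (Real.exp (μ*t)/μ) := by
              rw [LPaux.exp_mul_integral_Iic hμ t]
      have hnorm : ‖LPfast F g2 ε xh yh t‖
          ≤ (1/ε) * ((A * Real.exp ((γf/ε)*t)) * (Real.exp (μ*t)/μ)) := by
        have : ‖LPfast F g2 ε xh yh t‖
            = (1/ε) * ‖∫ s in Set.Iic t, NormedSpace.exp (((t - s)/ε) • F) (g2 s (xh s) (yh s))‖ := by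
          rw [LPfast, norm_smul, Real.norm_eq_abs, abs_of_pos (by positivity)]
        rw [this]
        exact mul_le_mul_of_nonneg_left hIntNorm (by positivity)
      have e5 : Real.exp ((γ/ε)*t) * Real.exp ((γf/ε)*t) * Real.exp (μ*t) = 1 := by
        rw [← Real.exp_add, ← Real.exp_add]
        rw [show (γ/ε)*t + (γf/ε)*t + μ*t = 0 by rw [hμdef]; field_simp; ring]
        exact Real.exp_zero
      calc Real.exp ((γ/ε)*t) * ‖LPfast F g2 ε xh yh t‖
          ≤ Real.exp ((γ/ε)*t) * ((1/ε) * ((A * Real.exp ((γf/ε)*t)) * (Real.exp (μ*t)/μ))) :=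
            mul_le_mul_of_nonneg_left hnorm (Real.exp_pos _).le
        _ = (A / (ε * μ)) * (Real.exp ((γ/ε)*t) * Real.exp ((γf/ε)*t) * Real.exp (μ*t)) := by
            field_simp
        _ = A / (ε * μ) := by rw [e5, mul_one]
    -- continuity of LPslow on Iic 0
    set k1 : ℝ → E₁ := fun s => NormedSpace.exp ((-s) • S) (G1 s) with hk1def
    have hk1sm : StronglyMeasurable k1 :=
      LPaux.sm_apply _ _ (NormedSpace.exp_continuous.comp
        (continuous_id.neg.smul continuous_const)) hG1sm
    have hk1loc : ∀ r : ℝ, ∃ C, ∀ s : ℝ, |s| ≤ r → ‖k1 s‖ ≤ C := by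
      intro r
      obtain ⟨C1, hC10, hC1⟩ := LPaux.bounded_on_compact
        (fun s : ℝ => NormedSpace.exp ((-s) • S))
        (NormedSpace.exp_continuous.comp (continuous_id.neg.smul continuous_const)) r
      obtain ⟨C2, hC2⟩ := hG1loc r
      refine ⟨C1 * C2, fun s hs => ?_⟩
      calc ‖k1 s‖ ≤ ‖NormedSpace.exp ((-s) • S)‖ * ‖G1 s‖ :=
            ContinuousLinearMap.le_opNorm _ _
        _ ≤ C1 * C2 := mul_le_mul (hC1 s hs) (hC2 s hs) (norm_nonneg _) hC10
    have hk1int : ∀ a b : ℝ, IntervalIntegrable k1 volume a b :=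
      LPaux.intervalIntegrable_of_bound k1 hk1sm.aestronglyMeasurable hk1loc
    have hP1 : Continuous fun t : ℝ => ∫ s in (0:ℝ)..t, k1 s :=
      intervalIntegral.continuous_primitive hk1int 0
    have hsplitS : ∀ t s : ℝ,
        NormedSpace.exp ((t - s) • S) (G1 s) = NormedSpace.exp (t • S) (k1 s) := by
      intro t s
      rw [hk1def]
      rw [show (t - s) • S = (t + (-s)) • S by rw [sub_eq_add_neg]]
      rw [LPaux.exp_smul_split]
      rfl
    have hLPslow_eq : ∀ t : ℝ, t ≤ 0 → LPslow S g1 x0 xh yh t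
        = NormedSpace.exp (t • S) x0
          + NormedSpace.exp (t • S) (∫ s in (0:ℝ)..t, k1 s) := by
      intro t ht
      rw [LPslow]
      congr 1
      calc (∫ s in (0:ℝ)..t, NormedSpace.exp ((t - s) • S) (g1 s (xh s) (yh s)))
          = ∫ s in (0:ℝ)..t, NormedSpace.exp ((t - s) • S) (G1 s) := by
            apply intervalIntegral.integral_congr
            intro s hs
            rw [Set.uIcc_of_ge ht] at hs
            exact congrArg (fun v => NormedSpace.exp ((t - s) • S) v) (hG1e s hs.2).symm
        _ = ∫ s in (0:ℝ)..t, NormedSpace.exp (t • S) (k1 s) := by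
            simp only [hsplitS]
        _ = NormedSpace.exp (t • S) (∫ s in (0:ℝ)..t, k1 s) :=
            ContinuousLinearMap.intervalIntegral_comp_comm _ (hk1int 0 t)
    have hslowcont : ContinuousOn (LPslow S g1 x0 xh yh) (Set.Iic 0) := by
      have hcont : Continuous fun t : ℝ => NormedSpace.exp (t • S) x0
          + NormedSpace.exp (t • S) (∫ s in (0:ℝ)..t, k1 s) := by
        have hexpc : Continuous fun t : ℝ => NormedSpace.exp (t • S) :=
          NormedSpace.exp_continuous.comp (continuous_id.smul continuous_const)
        exact (hexpc.clm_apply continuous_const).add (hexpc.clm_apply hP1)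
      exact ContinuousOn.congr hcont.continuousOn (fun t ht => hLPslow_eq t ht)
    -- continuity of LPfast on Iic 0
    set k2 : ℝ → E₂ := fun s => NormedSpace.exp ((-s/ε) • F) (G2 s) with hk2def
    have hk2cont0 : Continuous fun s : ℝ => NormedSpace.exp ((-s/ε) • F) :=
      NormedSpace.exp_continuous.comp ((continuous_id.neg.div_const ε).smul continuous_const)
    have hk2sm : StronglyMeasurable k2 := LPaux.sm_apply _ _ hk2cont0 hG2sm
    have hk2loc : ∀ r : ℝ, ∃ C, ∀ s : ℝ, |s| ≤ r → ‖k2 s‖ ≤ C := by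
      intro r
      obtain ⟨C1, hC10, hC1⟩ := LPaux.bounded_on_compact
        (fun s : ℝ => NormedSpace.exp ((-s/ε) • F)) hk2cont0 r
      obtain ⟨C2, hC2⟩ := hG2loc r
      refine ⟨C1 * C2, fun s hs => ?_⟩
      calc ‖k2 s‖ ≤ ‖NormedSpace.exp ((-s/ε) • F)‖ * ‖G2 s‖ :=
            ContinuousLinearMap.le_opNorm _ _
        _ ≤ C1 * C2 := mul_le_mul (hC1 s hs) (hC2 s hs) (norm_nonneg _) hC10
    have hk2int : ∀ a b : ℝ, IntervalIntegrable k2 volume a b :=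
      LPaux.intervalIntegrable_of_bound k2 hk2sm.aestronglyMeasurable hk2loc
    have hk2Iic : IntegrableOn k2 (Set.Iic 0) := by
      refine Integrable.mono' ((LPaux.exp_mul_integrableOn_Iic hμ 0).const_mul A)
        hk2sm.aestronglyMeasurable ?_
      filter_upwards [ae_restrict_mem measurableSet_Iic] with s hs
      have hs0 : s ≤ 0 := hs
      have h1 : ‖NormedSpace.exp ((-s/ε) • F) (G2 s)‖ ≤ Real.exp (γf*(-s/ε)) * ‖G2 s‖ :=
        hF (-s/ε) (div_nonneg (by linarith) hε.le) _
      have h3 := hG2p s hs0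
      have key : Real.exp (γf*(-s/ε)) * (A * Real.exp (-(γ/ε)*s)) = A * Real.exp (μ*s) := by
        have hexp : Real.exp (γf*(-s/ε)) * Real.exp (-(γ/ε)*s) = Real.exp (μ*s) := by
          rw [← Real.exp_add]
          congr 1
          rw [hμdef]; field_simp; ring
        calc Real.exp (γf*(-s/ε)) * (A * Real.exp (-(γ/ε)*s))
            = A * (Real.exp (γf*(-s/ε)) * Real.exp (-(γ/ε)*s)) := by ring
          _ = A * Real.exp (μ*s) := by rw [hexp]
      calc ‖k2 s‖ ≤ Real.exp (γf*(-s/ε)) * ‖G2 s‖ := h1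
        _ ≤ Real.exp (γf*(-s/ε)) * (A * Real.exp (-(γ/ε)*s)) :=
            mul_le_mul_of_nonneg_left h3 (Real.exp_pos _).le
        _ = A * Real.exp (μ*s) := key
    have hk2IicT : ∀ t : ℝ, t ≤ 0 → IntegrableOn k2 (Set.Iic t) :=
      fun t ht => hk2Iic.mono_set (Set.Iic_subset_Iic.mpr ht)
    have hQeq : ∀ t : ℝ, t ≤ 0 → (∫ s in Set.Iic t, k2 s)
        = (∫ s in Set.Iic (0:ℝ), k2 s) + ∫ s in (0:ℝ)..t, k2 s := by
      intro t ht
      have h := intervalIntegral.integral_Iic_sub_Iic hk2Iic (hk2IicT t ht)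
      exact sub_eq_iff_eq_add'.mp h
    have hsplitF : ∀ t s : ℝ,
        NormedSpace.exp (((t - s)/ε) • F) (G2 s) = NormedSpace.exp ((t/ε) • F) (k2 s) := by
      intro t s
      rw [hk2def]
      rw [show ((t - s)/ε) • F = (t/ε + (-s/ε)) • F by rw [show (t-s)/ε = t/ε + -s/ε by ring]]
      rw [LPaux.exp_smul_split]
      rfl
    have hLPfast_eq : ∀ t : ℝ, t ≤ 0 → LPfast F g2 ε xh yh t
        = (1/ε) • (NormedSpace.exp ((t/ε) • F)
            ((∫ s in Set.Iic (0:ℝ), k2 s) + ∫ s in (0:ℝ)..t, k2 s)) := by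
      intro t ht
      rw [LPfast]
      congr 1
      calc (∫ s in Set.Iic t, NormedSpace.exp (((t - s)/ε) • F) (g2 s (xh s) (yh s)))
          = ∫ s in Set.Iic t, NormedSpace.exp (((t - s)/ε) • F) (G2 s) :=
            (setIntegral_congr_fun measurableSet_Iic
              (fun s hs => by rw [hG2e s (le_trans hs ht)])).symm
        _ = ∫ s in Set.Iic t, NormedSpace.exp ((t/ε) • F) (k2 s) := by
            simp only [hsplitF]
        _ = NormedSpace.exp ((t/ε) • F) (∫ s in Set.Iic t, k2 s) :=
            ContinuousLinearMap.integral_comp_comm _ (hk2IicT t ht)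
        _ = NormedSpace.exp ((t/ε) • F)
            ((∫ s in Set.Iic (0:ℝ), k2 s) + ∫ s in (0:ℝ)..t, k2 s) := by rw [hQeq t ht]
    have hfastcont : ContinuousOn (LPfast F g2 ε xh yh) (Set.Iic 0) := by
      have hcont : Continuous fun t : ℝ => (1/ε) • (NormedSpace.exp ((t/ε) • F)
          ((∫ s in Set.Iic (0:ℝ), k2 s) + ∫ s in (0:ℝ)..t, k2 s)) := by
        have hexpc : Continuous fun t : ℝ => NormedSpace.exp ((t/ε) • F) :=
          NormedSpace.exp_continuous.comp ((continuous_id.div_const ε).smul continuous_const)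
        exact (hexpc.clm_apply (continuous_const.add
          (intervalIntegral.continuous_primitive hk2int 0))).const_smul _
      exact ContinuousOn.congr hcont.continuousOn (fun t ht => hLPfast_eq t ht)
    -- weighted-norm wrap-ups
    have hslowb' : ∀ t : Set.Iic (0:ℝ),
        Real.exp (-(-γ/ε) * t.1) * ‖LPslow S g1 x0 xh yh t.1‖ ≤ ‖x0‖ + A / c1 := by
      intro t
      have h := hslowb t.1 t.2
      rwa [hneg]
    have hfastb' : ∀ t : Set.Iic (0:ℝ),
        Real.exp (-(-γ/ε) * t.1) * ‖LPfast F g2 ε xh yh t.1‖ ≤ A / (ε * μ) := by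
      intro t
      have h := hfastb t.1 t.2
      rwa [hneg]
    have hslowmem : MemCneg (-γ/ε) (LPslow S g1 x0 xh yh) :=
      ⟨hslowcont, ⟨‖x0‖ + A / c1, by rintro v ⟨t, rfl⟩; exact hslowb' t⟩⟩
    have hfastmem : MemCneg (-γ/ε) (LPfast F g2 ε xh yh) :=
      ⟨hfastcont, ⟨A / (ε * μ), by rintro v ⟨t, rfl⟩; exact hfastb' t⟩⟩
    refine ⟨hSlowInt, hFastInt, hslowmem, hfastmem, ?_⟩
    have hns : negNorm (-γ/ε) (LPslow S g1 x0 xh yh) ≤ ‖x0‖ + A / c1 := ciSup_le hslowb'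
    have hnf : negNorm (-γ/ε) (LPfast F g2 ε xh yh) ≤ A / (ε * μ) := ciSup_le hfastb'
    have hc1eq : c1 = (γ + ε*γs)/ε := by rw [hc1def]; field_simp
    have hAc1 : A / c1 = A * ε / (γ + ε*γs) := by rw [hc1eq, div_div_eq_mul_div]
    have hεμ : ε * μ = -(γ+γf) := by rw [hμdef]; field_simp
    have harith : (‖x0‖ + A / c1) + A / (ε * μ)
        = (ε * K / (γ + ε * γs) - K / (γ + γf)) * (Nx + Ny) + (‖x0‖ + M * D) := by
      rw [hAc1, hεμ, hAdef, hDdef, div_neg]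
      field_simp [hden1.ne', hγγf.ne]
      ring
    linarith [hns, hnf]
end
end

section
/- For every x₀ ∈ E₁ and all φ₁, φ₂ ∈ C_β^−(E₁ × E₂), the Lyapunov–Perron operator satisfies ‖I^ε_{x₀}(φ₁) − I^ε_{x₀}(φ₂)‖_{C_β^−} ≤ ρ(ε)·‖φ₁ − φ₂‖_{C_β^−}. -/
open MeasureTheory Real Filter

noncomputable section

variable {E₁ E₂ : Type*}
  [NormedAddCommGroup E₁] [NormedSpace ℝ E₁]
  [NormedAddCommGroup E₂] [NormedSpace ℝ E₂]

set_option maxHeartbeats 1000000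
set_option synthInstance.maxHeartbeats 1000000

theorem integrableOn_exp_mul_Iic' {c : ℝ} (t : ℝ) (hc : 0 < c) :
    IntegrableOn (fun s => Real.exp (c*s)) (Set.Iic t) := by
  have h1 : Integrable ((Set.Iic (c*t)).indicator Real.exp) := by
    rw [integrable_indicator_iff measurableSet_Iic]
    exact integrableOn_exp_Iic (c*t)
  have h2 := (integrable_comp_mul_left_iff ((Set.Iic (c*t)).indicator Real.exp) hc.ne').2 h1
  have h3 : (fun x => ((Set.Iic (c*t)).indicator Real.exp) (c*x))
      = (Set.Iic t).indicator (fun s => Real.exp (c*s)) := by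
    funext s
    by_cases h : s ≤ t
    · rw [Set.indicator_of_mem (by simpa using mul_le_mul_of_nonneg_left h hc.le),
        Set.indicator_of_mem (by simpa using h)]
    · rw [Set.indicator_of_notMem (by simp; exact (mul_lt_mul_iff_right₀ hc).2 (lt_of_not_ge h)),
        Set.indicator_of_notMem (by simpa using h)]
  rw [h3] at h2
  rwa [integrable_indicator_iff measurableSet_Iic] at h2

theorem integral_exp_mul_Iic' {c : ℝ} (t : ℝ) (hc : 0 < c) :
    ∫ s in Set.Iic t, Real.exp (c*s) = Real.exp (c*t) / c := by
  have hderiv : ∀ x ∈ Set.Iio t, HasDerivAt (fun s => Real.exp (c*s) / c) (Real.exp (c*x)) x := by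
    intro x _
    have h1 : HasDerivAt (fun s : ℝ => c*s) c x := by
      simpa using (hasDerivAt_id x).const_mul c
    have h2 := ((Real.hasDerivAt_exp (c*x)).comp x h1).div_const c
    simpa [mul_div_assoc, mul_div_cancel_right₀ _ hc.ne'] using h2
  have hcont : ContinuousWithinAt (fun s => Real.exp (c*s) / c) (Set.Iic t) t :=
    Continuous.continuousWithinAt (by continuity)
  have htend : Filter.Tendsto (fun s => Real.exp (c*s) / c) Filter.atBot (nhds 0) := by
    have h1 : Filter.Tendsto (fun s : ℝ => c*s) Filter.atBot Filter.atBot :=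
      Filter.tendsto_id.const_mul_atBot hc
    simpa using (Real.tendsto_exp_atBot.comp h1).div_const c
  simpa using integral_Iic_of_hasDerivAt_of_tendsto hcont hderiv
    (integrableOn_exp_mul_Iic' t hc) htend

theorem integrand_aesm' {E₁ E₂ E : Type*}
    [NormedAddCommGroup E₁] [NormedSpace ℝ E₁] [FiniteDimensional ℝ E₁] [MeasurableSpace E₁] [BorelSpace E₁]
    [NormedAddCommGroup E₂] [NormedSpace ℝ E₂] [FiniteDimensional ℝ E₂] [MeasurableSpace E₂] [BorelSpace E₂]
    [NormedAddCommGroup E] [NormedSpace ℝ E] [FiniteDimensional ℝ E] [MeasurableSpace E] [BorelSpace E]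
    (g : ℝ → E₁ → E₂ → E) (K : ℝ) (hK : 0 ≤ K)
    (hm : ∀ x y, Measurable fun t => g t x y)
    (hl : ∀ t x₁ y₁ x₂ y₂, ‖g t x₁ y₁ - g t x₂ y₂‖ ≤ K*(‖x₁-x₂‖+‖y₁-y₂‖))
    {x : ℝ → E₁} {y : ℝ → E₂} (hx : ContinuousOn x (Set.Iic 0)) (hy : ContinuousOn y (Set.Iic 0))
    {A : Set ℝ} (hA : MeasurableSet A) (hsub : A ⊆ Set.Iic 0) :
    AEStronglyMeasurable (fun s => g s (x s) (y s)) (volume.restrict A) := by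
  have hcont : ∀ t, Continuous fun p : E₁ × E₂ => g t p.1 p.2 := by
    intro t
    refine (LipschitzWith.of_dist_le_mul (K := Real.toNNReal (2*K)) ?_).continuous
    intro p q
    rw [dist_eq_norm, Real.coe_toNNReal _ (by linarith)]
    have h1 : dist p.1 q.1 ≤ dist p q := by rw [Prod.dist_eq]; exact le_max_left _ _
    have h2 : dist p.2 q.2 ≤ dist p q := by rw [Prod.dist_eq]; exact le_max_right _ _
    calc ‖g t p.1 p.2 - g t q.1 q.2‖ ≤ K*(‖p.1-q.1‖+‖p.2-q.2‖) := hl t _ _ _ _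
      _ ≤ K*(dist p q + dist p q) := by
          apply mul_le_mul_of_nonneg_left _ hK
          rw [← dist_eq_norm, ← dist_eq_norm]
          exact add_le_add h1 h2
      _ = 2*K*dist p q := by ring
  have hunc : Measurable (Function.uncurry (fun (p : E₁ × E₂) (t : ℝ) => g t p.1 p.2)) :=
    measurable_uncurry_of_continuous_of_measurable (fun t => hcont t) (fun p => hm p.1 p.2)
  have hxm : AEMeasurable x (volume.restrict A) := (hx.mono hsub).aemeasurable hA
  have hym : AEMeasurable y (volume.restrict A) := (hy.mono hsub).aemeasurable hA
  have hpair : AEMeasurable (fun s => ((x s, y s), s)) (volume.restrict A) :=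
    (hxm.prodMk hym).prodMk aemeasurable_id
  exact (hunc.comp_aemeasurable hpair).aestronglyMeasurable

theorem apply_aesm' {E E' : Type*}
    [NormedAddCommGroup E] [NormedSpace ℝ E] [FiniteDimensional ℝ E]
    [NormedAddCommGroup E'] [NormedSpace ℝ E'] [FiniteDimensional ℝ E']
    {μ : Measure ℝ} (Φ : ℝ → E →L[ℝ] E') (hΦ : Continuous Φ)
    {h : ℝ → E} (hh : AEStronglyMeasurable h μ) :
    AEStronglyMeasurable (fun s => Φ s (h s)) μ :=
  isBoundedBilinearMap_apply.continuous.comp_aestronglyMeasurable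
    (hΦ.aestronglyMeasurable.prodMk hh)

/-- From a weighted bound `exp (-β s) ‖φ s‖ ≤ M` deduce `‖φ s‖ ≤ M exp (β s)`. -/
theorem norm_le_of_weighted {E : Type*} [NormedAddCommGroup E] {φ : ℝ → E} {β M s : ℝ}
    (h : Real.exp (-β * s) * ‖φ s‖ ≤ M) : ‖φ s‖ ≤ M * Real.exp (β * s) := by
  calc ‖φ s‖ = Real.exp (β*s) * (Real.exp (-β*s) * ‖φ s‖) := by
        rw [← mul_assoc, ← Real.exp_add]; ring_nf; simp
    _ ≤ Real.exp (β*s) * M := mul_le_mul_of_nonneg_left h (Real.exp_pos _).le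
    _ = M * Real.exp (β*s) := mul_comm _ _

theorem negNorm_le' {E : Type*} [NormedAddCommGroup E] {β C : ℝ} {φ : ℝ → E}
    (h : ∀ s, s ≤ 0 → Real.exp (-β * s) * ‖φ s‖ ≤ C) : negNorm β φ ≤ C := by
  haveI : Nonempty (Set.Iic (0:ℝ)) := ⟨⟨0, Set.self_mem_Iic⟩⟩
  exact ciSup_le fun t => h t.1 t.2

theorem le_negNorm' {E : Type*} [NormedAddCommGroup E] {β : ℝ} {φ : ℝ → E}
    (bdd : BddAbove (Set.range fun t : Set.Iic (0:ℝ) => Real.exp (-β * t.1) * ‖φ t.1‖))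
    {s : ℝ} (hs : s ≤ 0) : ‖φ s‖ ≤ negNorm β φ * Real.exp (β * s) :=
  norm_le_of_weighted (le_ciSup bdd ⟨s, hs⟩)

theorem negNorm_nonneg' {E : Type*} [NormedAddCommGroup E] {β : ℝ} {φ : ℝ → E}
    (bdd : BddAbove (Set.range fun t : Set.Iic (0:ℝ) => Real.exp (-β * t.1) * ‖φ t.1‖)) :
    0 ≤ negNorm β φ :=
  le_trans (mul_nonneg (Real.exp_pos _).le (norm_nonneg _)) (le_ciSup bdd ⟨0, Set.self_mem_Iic⟩)

theorem memC_bound {E : Type*} [NormedAddCommGroup E] {β : ℝ} {φ : ℝ → E} (h : MemCneg β φ) :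
    ∃ M, 0 ≤ M ∧ ∀ s, s ≤ (0:ℝ) → ‖φ s‖ ≤ M * Real.exp (β * s) := by
  obtain ⟨M, hM⟩ := h.2
  have key : ∀ s, s ≤ (0:ℝ) → Real.exp (-β * s) * ‖φ s‖ ≤ M := by
    intro s hs
    exact hM ⟨⟨s, hs⟩, rfl⟩
  refine ⟨M, ?_, fun s hs => norm_le_of_weighted (key s hs)⟩
  exact le_trans (mul_nonneg (Real.exp_pos _).le (norm_nonneg _)) (key 0 le_rfl)

theorem bdd_diff {E : Type*} [NormedAddCommGroup E] {β : ℝ} {φ ψ : ℝ → E}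
    (hφ : BddAbove (Set.range fun t : Set.Iic (0:ℝ) => Real.exp (-β * t.1) * ‖φ t.1‖))
    (hψ : BddAbove (Set.range fun t : Set.Iic (0:ℝ) => Real.exp (-β * t.1) * ‖ψ t.1‖)) :
    BddAbove (Set.range fun t : Set.Iic (0:ℝ) => Real.exp (-β * t.1) * ‖φ t.1 - ψ t.1‖) := by
  obtain ⟨M₁, hM₁⟩ := hφ
  obtain ⟨M₂, hM₂⟩ := hψ
  refine ⟨M₁ + M₂, ?_⟩
  rintro v ⟨t, rfl⟩
  calc Real.exp (-β * t.1) * ‖φ t.1 - ψ t.1‖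
      ≤ Real.exp (-β * t.1) * (‖φ t.1‖ + ‖ψ t.1‖) :=
        mul_le_mul_of_nonneg_left (norm_sub_le _ _) (Real.exp_pos _).le
    _ = Real.exp (-β * t.1) * ‖φ t.1‖ + Real.exp (-β * t.1) * ‖ψ t.1‖ := mul_add _ _ _
    _ ≤ M₁ + M₂ := add_le_add (hM₁ (Set.mem_range_self t)) (hM₂ (Set.mem_range_self t))

/-- The Lyapunov–Perron operator is `ρ(ε)`-Lipschitz on `C_β^-`. -/
theorem lyapunovPerron_lipschitz
    {E₁ E₂ : Type*}
    [NormedAddCommGroup E₁] [NormedSpace ℝ E₁] [FiniteDimensional ℝ E₁] [MeasurableSpace E₁] [BorelSpace E₁]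
    [NormedAddCommGroup E₂] [NormedSpace ℝ E₂] [FiniteDimensional ℝ E₂] [MeasurableSpace E₂] [BorelSpace E₂]
    (S : E₁ →L[ℝ] E₁) (F : E₂ →L[ℝ] E₂)
    (γs γf γ K ε : ℝ)
    (hγs : 0 < γs) (hγf : γf < 0) (hγ : 0 < γ) (hK : 0 < K)
    (hgap : K < -(γ + γf)) (hε : 0 < ε)
    (hS : ∀ t ≤ (0:ℝ), ∀ x : E₁, ‖NormedSpace.exp (t • S) x‖ ≤ Real.exp (γs * t) * ‖x‖)
    (hF : ∀ t ≥ (0:ℝ), ∀ y : E₂, ‖NormedSpace.exp (t • F) y‖ ≤ Real.exp (γf * t) * ‖y‖)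
    (g1 : ℝ → E₁ → E₂ → E₁) (g2 : ℝ → E₁ → E₂ → E₂)
    (hg1m : ∀ x y, Measurable fun t => g1 t x y)
    (hg2m : ∀ x y, Measurable fun t => g2 t x y)
    (hg1b : ∀ x y r, ∃ M, ∀ t : ℝ, |t| ≤ r → ‖g1 t x y‖ ≤ M)
    (hg2b : ∀ x y r, ∃ M, ∀ t : ℝ, |t| ≤ r → ‖g2 t x y‖ ≤ M)
    (hg1l : ∀ t x₁ y₁ x₂ y₂, ‖g1 t x₁ y₁ - g1 t x₂ y₂‖ ≤ K * (‖x₁ - x₂‖ + ‖y₁ - y₂‖))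
    (hg2l : ∀ t x₁ y₁ x₂ y₂, ‖g2 t x₁ y₁ - g2 t x₂ y₂‖ ≤ K * (‖x₁ - x₂‖ + ‖y₁ - y₂‖))
    (hg0 : ∃ M, ∀ t ≤ (0:ℝ),
      Real.exp ((γ/ε) * t) * (‖g1 t 0 0‖ + ‖g2 t 0 0‖) ≤ M)
    :
    ∀ (x0 : E₁) (xh₁ : ℝ → E₁) (yh₁ : ℝ → E₂) (xh₂ : ℝ → E₁) (yh₂ : ℝ → E₂),
      MemCneg (-γ/ε) xh₁ → MemCneg (-γ/ε) yh₁ →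
      MemCneg (-γ/ε) xh₂ → MemCneg (-γ/ε) yh₂ →
      negNorm (-γ/ε) (fun t => LPslow S g1 x0 xh₁ yh₁ t - LPslow S g1 x0 xh₂ yh₂ t) +
        negNorm (-γ/ε) (fun t => LPfast F g2 ε xh₁ yh₁ t - LPfast F g2 ε xh₂ yh₂ t) ≤
      (ε * K / (γ + ε * γs) - K / (γ + γf)) *
        (negNorm (-γ/ε) (fun t => xh₁ t - xh₂ t) + negNorm (-γ/ε) (fun t => yh₁ t - yh₂ t)) := by
  intro x0 xh₁ yh₁ xh₂ yh₂ hx₁ hy₁ hx₂ hy₂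
  have hKpos : (0:ℝ) ≤ K := hK.le
  have hεne : ε ≠ 0 := hε.ne'
  have hγγf : γ + γf < 0 := by linarith
  have hβ : ∀ s : ℝ, (-(-γ/ε) * s) = (γ/ε)*s := fun s => by ring
  obtain ⟨M, hM⟩ := hg0
  have hM0 : (0:ℝ) ≤ M := le_trans (by positivity) (hM 0 le_rfl)
  have hg1z : ∀ s, s ≤ (0:ℝ) → ‖g1 s 0 0‖ ≤ M * Real.exp (-γ/ε * s) := by
    intro s hs
    apply norm_le_of_weighted (β := -γ/ε) (φ := fun u => g1 u 0 0)
    rw [hβ]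
    calc Real.exp ((γ/ε)*s) * ‖g1 s 0 0‖
        ≤ Real.exp ((γ/ε)*s) * (‖g1 s 0 0‖ + ‖g2 s 0 0‖) := by
          nlinarith [Real.exp_pos ((γ/ε)*s), norm_nonneg (g2 s 0 0)]
      _ ≤ M := hM s hs
  have hg2z : ∀ s, s ≤ (0:ℝ) → ‖g2 s 0 0‖ ≤ M * Real.exp (-γ/ε * s) := by
    intro s hs
    apply norm_le_of_weighted (β := -γ/ε) (φ := fun u => g2 u 0 0)
    rw [hβ]
    calc Real.exp ((γ/ε)*s) * ‖g2 s 0 0‖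
        ≤ Real.exp ((γ/ε)*s) * (‖g1 s 0 0‖ + ‖g2 s 0 0‖) := by
          nlinarith [Real.exp_pos ((γ/ε)*s), norm_nonneg (g1 s 0 0)]
      _ ≤ M := hM s hs
  have bddx := bdd_diff hx₁.2 hx₂.2
  have bddy := bdd_diff hy₁.2 hy₂.2
  have hD : ∀ s, s ≤ (0:ℝ) →
      ‖xh₁ s - xh₂ s‖ + ‖yh₁ s - yh₂ s‖ ≤
      (negNorm (-γ/ε) (fun t => xh₁ t - xh₂ t) + negNorm (-γ/ε) (fun t => yh₁ t - yh₂ t)) *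
        Real.exp (-γ/ε * s) := by
    intro s hs
    rw [add_mul]
    exact add_le_add (le_negNorm' (φ := fun t => xh₁ t - xh₂ t) bddx hs) (le_negNorm' (φ := fun t => yh₁ t - yh₂ t) bddy hs)
  have hNs0 : 0 ≤ negNorm (-γ/ε) (fun t => xh₁ t - xh₂ t) +
      negNorm (-γ/ε) (fun t => yh₁ t - yh₂ t) :=
    add_nonneg (negNorm_nonneg' bddx) (negNorm_nonneg' bddy)
  have hq1 : (0:ℝ) < γs + γ/ε := by positivity
  -- the slow estimate
  have hslow : negNorm (-γ/ε) (fun t => LPslow S g1 x0 xh₁ yh₁ t - LPslow S g1 x0 xh₂ yh₂ t) ≤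
      (ε * K / (γ + ε * γs)) *
      (negNorm (-γ/ε) (fun t => xh₁ t - xh₂ t) + negNorm (-γ/ε) (fun t => yh₁ t - yh₂ t)) := by
    apply negNorm_le'
    intro t ht
    rw [hβ]
    have hset : Set.uIoc (0:ℝ) t = Set.Ioc t 0 := by rw [Set.uIoc_comm, Set.uIoc_of_le ht]
    have hsub : Set.Ioc t (0:ℝ) ⊆ Set.Iic (0:ℝ) := Set.Ioc_subset_Iic_self
    have hΦcont : Continuous fun s : ℝ => NormedSpace.exp ((t - s) • S) :=
      (continuous_iff_continuousAt.2 fun x => (NormedSpace.exp_analytic (𝕂 := ℝ) x).continuousAt).comp ((continuous_const.sub continuous_id).smul continuous_const)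
    have hII : ∀ (x : ℝ → E₁) (y : ℝ → E₂), MemCneg (-γ/ε) x → MemCneg (-γ/ε) y →
        IntervalIntegrable (fun s => NormedSpace.exp ((t - s) • S) (g1 s (x s) (y s)))
          volume 0 t := by
      intro x y hx hy
      obtain ⟨Mx, hMx0, hMx⟩ := memC_bound hx
      obtain ⟨My, hMy0, hMy⟩ := memC_bound hy
      rw [intervalIntegrable_iff, hset]
      have haesm : AEStronglyMeasurable
          (fun s => NormedSpace.exp ((t - s) • S) (g1 s (x s) (y s)))
          (volume.restrict (Set.Ioc t 0)) :=
        apply_aesm' _ hΦcont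
          (integrand_aesm' g1 K hKpos hg1m hg1l hx.1 hy.1 measurableSet_Ioc hsub)
      refine Integrable.mono'
        ((by continuity : Continuous fun s : ℝ =>
          (M + K*(Mx+My)) * Real.exp (-γ/ε * s)).integrableOn_Ioc) haesm ?_
      filter_upwards [ae_restrict_mem measurableSet_Ioc] with s hs
      have hs0 : s ≤ (0:ℝ) := hs.2
      have hts : t - s ≤ 0 := by linarith [hs.1.le]
      have e1 := hS (t - s) hts (g1 s (x s) (y s))
      have e2 : Real.exp (γs*(t-s)) ≤ 1 := by
        rw [Real.exp_le_one_iff]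
        nlinarith
      have e3 : ‖g1 s (x s) (y s)‖ ≤ ‖g1 s 0 0‖ + K*(‖x s‖ + ‖y s‖) := by
        have h4 := hg1l s (x s) (y s) 0 0
        simp only [sub_zero] at h4
        calc ‖g1 s (x s) (y s)‖ = ‖(g1 s (x s) (y s) - g1 s 0 0) + g1 s 0 0‖ := by
              congr 1; abel
          _ ≤ ‖g1 s (x s) (y s) - g1 s 0 0‖ + ‖g1 s 0 0‖ := norm_add_le _ _
          _ ≤ K*(‖x s‖+‖y s‖) + ‖g1 s 0 0‖ := add_le_add_left h4 _
          _ = ‖g1 s 0 0‖ + K*(‖x s‖+‖y s‖) := add_comm _ _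
      calc ‖NormedSpace.exp ((t - s) • S) (g1 s (x s) (y s))‖
          ≤ Real.exp (γs*(t-s)) * ‖g1 s (x s) (y s)‖ := e1
        _ ≤ 1 * (‖g1 s 0 0‖ + K*(‖x s‖+‖y s‖)) :=
            mul_le_mul e2 e3 (norm_nonneg _) one_pos.le
        _ = ‖g1 s 0 0‖ + K*(‖x s‖+‖y s‖) := one_mul _
        _ ≤ M * Real.exp (-γ/ε * s) +
            K*(Mx * Real.exp (-γ/ε * s) + My * Real.exp (-γ/ε * s)) :=
            add_le_add (hg1z s hs0)
              (mul_le_mul_of_nonneg_left (add_le_add (hMx s hs0) (hMy s hs0)) hKpos)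
        _ = (M + K*(Mx+My)) * Real.exp (-γ/ε * s) := by ring
    have hI₁ := hII xh₁ yh₁ hx₁ hy₁
    have hI₂ := hII xh₂ yh₂ hx₂ hy₂
    have hdiff : LPslow S g1 x0 xh₁ yh₁ t - LPslow S g1 x0 xh₂ yh₂ t =
        ∫ s in (0:ℝ)..t, NormedSpace.exp ((t - s) • S)
          (g1 s (xh₁ s) (yh₁ s) - g1 s (xh₂ s) (yh₂ s)) := by
      unfold LPslow
      rw [add_sub_add_left_eq_sub, ← intervalIntegral.integral_sub hI₁ hI₂]
      apply intervalIntegral.integral_congr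
      intro s _
      simp only [map_sub]
    have hae : ∀ᵐ s ∂volume.restrict (Set.uIoc (0:ℝ) t),
        ‖NormedSpace.exp ((t - s) • S) (g1 s (xh₁ s) (yh₁ s) - g1 s (xh₂ s) (yh₂ s))‖ ≤
        Real.exp (γs*(t-s)) * (K * ((negNorm (-γ/ε) (fun u => xh₁ u - xh₂ u) +
          negNorm (-γ/ε) (fun u => yh₁ u - yh₂ u)) * Real.exp (-γ/ε * s))) := by
      rw [hset]
      filter_upwards [ae_restrict_mem measurableSet_Ioc] with s hs
      have hs0 : s ≤ (0:ℝ) := hs.2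
      have hts : t - s ≤ 0 := by linarith [hs.1.le]
      calc ‖NormedSpace.exp ((t - s) • S) (g1 s (xh₁ s) (yh₁ s) - g1 s (xh₂ s) (yh₂ s))‖
          ≤ Real.exp (γs*(t-s)) * ‖g1 s (xh₁ s) (yh₁ s) - g1 s (xh₂ s) (yh₂ s)‖ :=
            hS (t-s) hts _
        _ ≤ Real.exp (γs*(t-s)) * (K * ((negNorm (-γ/ε) (fun u => xh₁ u - xh₂ u) +
            negNorm (-γ/ε) (fun u => yh₁ u - yh₂ u)) * Real.exp (-γ/ε * s))) := by
            refine mul_le_mul_of_nonneg_left ?_ (Real.exp_pos _).le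
            exact (hg1l s _ _ _ _).trans (mul_le_mul_of_nonneg_left (hD s hs0) hKpos)
    have hgbdII : IntervalIntegrable (fun s => Real.exp (γs*(t-s)) *
        (K * ((negNorm (-γ/ε) (fun u => xh₁ u - xh₂ u) +
          negNorm (-γ/ε) (fun u => yh₁ u - yh₂ u)) * Real.exp (-γ/ε * s)))) volume 0 t :=
      Continuous.intervalIntegrable (by continuity) _ _
    have hb := intervalIntegral.norm_integral_le_abs_of_norm_le hae hgbdII
    have hd0 : (γs + γ/ε) ≠ 0 := hq1.ne'
    have hIval : (∫ s in t..(0:ℝ), Real.exp ((-(γs+γ/ε))*s))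
        = (-(γs+γ/ε))⁻¹ * (Real.exp ((-(γs+γ/ε))*0) - Real.exp ((-(γs+γ/ε))*t)) := by
      rw [intervalIntegral.integral_comp_mul_left Real.exp (neg_ne_zero.2 hd0)]
      rw [integral_exp, smul_eq_mul]
    have hval : (∫ s in t..(0:ℝ), Real.exp (γs*(t-s)) *
        (K * ((negNorm (-γ/ε) (fun u => xh₁ u - xh₂ u) +
          negNorm (-γ/ε) (fun u => yh₁ u - yh₂ u)) * Real.exp (-γ/ε * s))))
        = (K * (negNorm (-γ/ε) (fun u => xh₁ u - xh₂ u) +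
            negNorm (-γ/ε) (fun u => yh₁ u - yh₂ u)) * Real.exp (γs*t)) *
          ((-(γs+γ/ε))⁻¹ * (1 - Real.exp ((-(γs+γ/ε))*t))) := by
      have heq : ∀ s : ℝ, Real.exp (γs*(t-s)) *
          (K * ((negNorm (-γ/ε) (fun u => xh₁ u - xh₂ u) +
            negNorm (-γ/ε) (fun u => yh₁ u - yh₂ u)) * Real.exp (-γ/ε * s)))
          = (K * (negNorm (-γ/ε) (fun u => xh₁ u - xh₂ u) +
              negNorm (-γ/ε) (fun u => yh₁ u - yh₂ u)) * Real.exp (γs*t)) *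
            Real.exp ((-(γs+γ/ε))*s) := by
        intro s
        rw [show (-(γs+γ/ε))*s = (γs*(t-s)) + (-γ/ε * s) + (-(γs*t)) by field_simp; ring,
          Real.exp_add, Real.exp_add, Real.exp_neg]
        field_simp
      simp only [heq]
      rw [intervalIntegral.integral_const_mul, hIval, mul_zero, Real.exp_zero]
    have habs : |∫ s in (0:ℝ)..t, Real.exp (γs*(t-s)) *
        (K * ((negNorm (-γ/ε) (fun u => xh₁ u - xh₂ u) +
          negNorm (-γ/ε) (fun u => yh₁ u - yh₂ u)) * Real.exp (-γ/ε * s)))|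
        = ∫ s in t..(0:ℝ), Real.exp (γs*(t-s)) *
          (K * ((negNorm (-γ/ε) (fun u => xh₁ u - xh₂ u) +
            negNorm (-γ/ε) (fun u => yh₁ u - yh₂ u)) * Real.exp (-γ/ε * s))) := by
      have hnn : (0:ℝ) ≤ ∫ s in t..(0:ℝ), Real.exp (γs*(t-s)) *
          (K * ((negNorm (-γ/ε) (fun u => xh₁ u - xh₂ u) +
            negNorm (-γ/ε) (fun u => yh₁ u - yh₂ u)) * Real.exp (-γ/ε * s))) := by
        apply intervalIntegral.integral_nonneg ht
        intro u _
        exact mul_nonneg (Real.exp_pos _).le (mul_nonneg hKpos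
          (mul_nonneg (add_nonneg (negNorm_nonneg' bddx) (negNorm_nonneg' bddy))
            (Real.exp_pos _).le))
      rw [intervalIntegral.integral_symm t 0, abs_neg, abs_of_nonneg hnn]
    have key1 : ∀ (q a b KN : ℝ), q ≠ 0 → a ≠ 0 → b ≠ 0 →
        a * ((KN * b) * ((-q)⁻¹ * (1 - (b*a)⁻¹)))
          = KN * ((1 - b*a)/q) := by
      intros q a b KN hq ha hb
      field_simp
      ring
    calc Real.exp ((γ/ε)*t) * ‖LPslow S g1 x0 xh₁ yh₁ t - LPslow S g1 x0 xh₂ yh₂ t‖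
        ≤ Real.exp ((γ/ε)*t) * ((K * (negNorm (-γ/ε) (fun u => xh₁ u - xh₂ u) +
            negNorm (-γ/ε) (fun u => yh₁ u - yh₂ u)) * Real.exp (γs*t)) *
          ((-(γs+γ/ε))⁻¹ * (1 - Real.exp ((-(γs+γ/ε))*t)))) := by
          rw [hdiff]
          refine mul_le_mul_of_nonneg_left ?_ (Real.exp_pos _).le
          rw [← hval, ← habs]
          exact hb
      _ = K * (negNorm (-γ/ε) (fun u => xh₁ u - xh₂ u) +
            negNorm (-γ/ε) (fun u => yh₁ u - yh₂ u)) *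
            ((1 - Real.exp ((γs+γ/ε)*t))/(γs+γ/ε)) := by
          rw [show (-(γs+γ/ε))*t = -((γs+γ/ε)*t) by ring, Real.exp_neg,
            show (γs+γ/ε)*t = γs*t + (γ/ε)*t by ring, Real.exp_add]
          exact key1 _ _ _ _ hq1.ne' (Real.exp_ne_zero _) (Real.exp_ne_zero _)
      _ ≤ K * (negNorm (-γ/ε) (fun u => xh₁ u - xh₂ u) +
            negNorm (-γ/ε) (fun u => yh₁ u - yh₂ u)) * (1/(γs+γ/ε)) := by
          refine mul_le_mul_of_nonneg_left ?_ (mul_nonneg hKpos hNs0)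
          refine (div_le_div_iff_of_pos_right hq1).2 ?_
          nlinarith [Real.exp_pos ((γs+γ/ε)*t)]
      _ = (ε * K / (γ + ε * γs)) * (negNorm (-γ/ε) (fun u => xh₁ u - xh₂ u) +
            negNorm (-γ/ε) (fun u => yh₁ u - yh₂ u)) := by
          have h1 : γ + ε*γs ≠ 0 := by positivity
          have h5 : γs + γ/ε = (γ + ε*γs)/ε := by field_simp; ring
          rw [h5, one_div_div]
          field_simp
  -- the fast estimate
  have hq2 : (0:ℝ) < (-(γf+γ))/ε := div_pos (by linarith) hε
  have hfast : negNorm (-γ/ε) (fun t => LPfast F g2 ε xh₁ yh₁ t - LPfast F g2 ε xh₂ yh₂ t) ≤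
      (-(K/(γ+γf))) *
      (negNorm (-γ/ε) (fun t => xh₁ t - xh₂ t) + negNorm (-γ/ε) (fun t => yh₁ t - yh₂ t)) := by
    apply negNorm_le'
    intro t ht
    rw [hβ]
    have hsub : Set.Iic t ⊆ Set.Iic (0:ℝ) := Set.Iic_subset_Iic.2 ht
    have hΦcont : Continuous fun s : ℝ => NormedSpace.exp (((t - s)/ε) • F) :=
      (continuous_iff_continuousAt.2 fun x => (NormedSpace.exp_analytic (𝕂 := ℝ) x).continuousAt).comp
        (((continuous_const.sub continuous_id).div_const ε).smul continuous_const)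
    have hIf : ∀ (x : ℝ → E₁) (y : ℝ → E₂), MemCneg (-γ/ε) x → MemCneg (-γ/ε) y →
        IntegrableOn (fun s => NormedSpace.exp (((t - s)/ε) • F) (g2 s (x s) (y s)))
          (Set.Iic t) := by
      intro x y hx hy
      obtain ⟨Mx, hMx0, hMx⟩ := memC_bound hx
      obtain ⟨My, hMy0, hMy⟩ := memC_bound hy
      have haesm : AEStronglyMeasurable
          (fun s => NormedSpace.exp (((t - s)/ε) • F) (g2 s (x s) (y s)))
          (volume.restrict (Set.Iic t)) :=
        apply_aesm' _ hΦcont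
          (integrand_aesm' g2 K hKpos hg2m hg2l hx.1 hy.1 measurableSet_Iic hsub)
      refine Integrable.mono'
        ((integrableOn_exp_mul_Iic' t hq2).const_mul
          ((M + K*(Mx+My)) * Real.exp ((γf/ε)*t))) haesm ?_
      filter_upwards [ae_restrict_mem measurableSet_Iic] with s hs
      have hs0 : s ≤ (0:ℝ) := le_trans hs ht
      have hts : (0:ℝ) ≤ (t - s)/ε := div_nonneg (by linarith [hs.out]) hε.le
      have e1 := hF ((t-s)/ε) hts (g2 s (x s) (y s))
      have e3 : ‖g2 s (x s) (y s)‖ ≤ ‖g2 s 0 0‖ + K*(‖x s‖ + ‖y s‖) := by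
        have h4 := hg2l s (x s) (y s) 0 0
        simp only [sub_zero] at h4
        calc ‖g2 s (x s) (y s)‖ = ‖(g2 s (x s) (y s) - g2 s 0 0) + g2 s 0 0‖ := by
              congr 1; abel
          _ ≤ ‖g2 s (x s) (y s) - g2 s 0 0‖ + ‖g2 s 0 0‖ := norm_add_le _ _
          _ ≤ K*(‖x s‖+‖y s‖) + ‖g2 s 0 0‖ := add_le_add_left h4 _
          _ = ‖g2 s 0 0‖ + K*(‖x s‖+‖y s‖) := add_comm _ _
      calc ‖NormedSpace.exp (((t - s)/ε) • F) (g2 s (x s) (y s))‖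
          ≤ Real.exp (γf*((t-s)/ε)) * ‖g2 s (x s) (y s)‖ := e1
        _ ≤ Real.exp (γf*((t-s)/ε)) * ((M + K*(Mx+My)) * Real.exp (-γ/ε * s)) := by
            refine mul_le_mul_of_nonneg_left (e3.trans ?_) (Real.exp_pos _).le
            calc ‖g2 s 0 0‖ + K*(‖x s‖+‖y s‖)
                ≤ M * Real.exp (-γ/ε * s) +
                  K*(Mx * Real.exp (-γ/ε * s) + My * Real.exp (-γ/ε * s)) :=
                  add_le_add (hg2z s hs0)
                    (mul_le_mul_of_nonneg_left (add_le_add (hMx s hs0) (hMy s hs0)) hKpos)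
              _ = (M + K*(Mx+My)) * Real.exp (-γ/ε * s) := by ring
        _ = ((M + K*(Mx+My)) * Real.exp ((γf/ε)*t)) * Real.exp (((-(γf+γ))/ε)*s) := by
            rw [show ((-(γf+γ))/ε)*s = (γf*((t-s)/ε)) + (-γ/ε * s) + (-((γf/ε)*t)) by
              field_simp; ring, Real.exp_add, Real.exp_add, Real.exp_neg]
            field_simp
    have hI₁ := hIf xh₁ yh₁ hx₁ hy₁
    have hI₂ := hIf xh₂ yh₂ hx₂ hy₂
    have hdiff : LPfast F g2 ε xh₁ yh₁ t - LPfast F g2 ε xh₂ yh₂ t =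
        (1/ε) • ∫ s in Set.Iic t, NormedSpace.exp (((t - s)/ε) • F)
            (g2 s (xh₁ s) (yh₁ s) - g2 s (xh₂ s) (yh₂ s)) := by
      unfold LPfast
      rw [← smul_sub, ← integral_sub hI₁ hI₂]
      congr 1
      apply integral_congr_ae
      filter_upwards with s
      simp only [map_sub]
    have hae : ∀ᵐ s ∂volume.restrict (Set.Iic t),
        ‖NormedSpace.exp (((t - s)/ε) • F) (g2 s (xh₁ s) (yh₁ s) - g2 s (xh₂ s) (yh₂ s))‖ ≤
        (K * (negNorm (-γ/ε) (fun u => xh₁ u - xh₂ u) +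
          negNorm (-γ/ε) (fun u => yh₁ u - yh₂ u)) * Real.exp ((γf/ε)*t)) *
          Real.exp (((-(γf+γ))/ε)*s) := by
      filter_upwards [ae_restrict_mem measurableSet_Iic] with s hs
      have hs0 : s ≤ (0:ℝ) := le_trans hs ht
      have hts : (0:ℝ) ≤ (t - s)/ε := div_nonneg (by linarith [hs.out]) hε.le
      calc ‖NormedSpace.exp (((t - s)/ε) • F) (g2 s (xh₁ s) (yh₁ s) - g2 s (xh₂ s) (yh₂ s))‖
          ≤ Real.exp (γf*((t-s)/ε)) * ‖g2 s (xh₁ s) (yh₁ s) - g2 s (xh₂ s) (yh₂ s)‖ :=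
            hF ((t-s)/ε) hts _
        _ ≤ Real.exp (γf*((t-s)/ε)) * (K * ((negNorm (-γ/ε) (fun u => xh₁ u - xh₂ u) +
            negNorm (-γ/ε) (fun u => yh₁ u - yh₂ u)) * Real.exp (-γ/ε * s))) := by
            refine mul_le_mul_of_nonneg_left ?_ (Real.exp_pos _).le
            exact (hg2l s _ _ _ _).trans (mul_le_mul_of_nonneg_left (hD s hs0) hKpos)
        _ = (K * (negNorm (-γ/ε) (fun u => xh₁ u - xh₂ u) +
            negNorm (-γ/ε) (fun u => yh₁ u - yh₂ u)) * Real.exp ((γf/ε)*t)) *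
            Real.exp (((-(γf+γ))/ε)*s) := by
            rw [show ((-(γf+γ))/ε)*s = (γf*((t-s)/ε)) + (-γ/ε * s) + (-((γf/ε)*t)) by
              field_simp; ring, Real.exp_add, Real.exp_add, Real.exp_neg]
            field_simp
    have hgInt : Integrable (fun s => (K * (negNorm (-γ/ε) (fun u => xh₁ u - xh₂ u) +
        negNorm (-γ/ε) (fun u => yh₁ u - yh₂ u)) * Real.exp ((γf/ε)*t)) *
        Real.exp (((-(γf+γ))/ε)*s)) (volume.restrict (Set.Iic t)) :=
      (integrableOn_exp_mul_Iic' t hq2).const_mul _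
    have hb := norm_integral_le_of_norm_le hgInt hae
    have hval : (∫ s in Set.Iic t, (K * (negNorm (-γ/ε) (fun u => xh₁ u - xh₂ u) +
        negNorm (-γ/ε) (fun u => yh₁ u - yh₂ u)) * Real.exp ((γf/ε)*t)) *
        Real.exp (((-(γf+γ))/ε)*s))
        = (K * (negNorm (-γ/ε) (fun u => xh₁ u - xh₂ u) +
            negNorm (-γ/ε) (fun u => yh₁ u - yh₂ u)) * Real.exp ((γf/ε)*t)) *
          (Real.exp (((-(γf+γ))/ε)*t)/((-(γf+γ))/ε)) := by
      rw [MeasureTheory.integral_const_mul, integral_exp_mul_Iic' t hq2]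
    calc Real.exp ((γ/ε)*t) * ‖LPfast F g2 ε xh₁ yh₁ t - LPfast F g2 ε xh₂ yh₂ t‖
        = Real.exp ((γ/ε)*t) * ((1/ε) * ‖∫ s in Set.Iic t,
            NormedSpace.exp (((t - s)/ε) • F)
              (g2 s (xh₁ s) (yh₁ s) - g2 s (xh₂ s) (yh₂ s))‖) := by
          rw [hdiff, norm_smul, Real.norm_eq_abs, abs_of_pos (by positivity)]
      _ ≤ Real.exp ((γ/ε)*t) * ((1/ε) * ((K * (negNorm (-γ/ε) (fun u => xh₁ u - xh₂ u) +
            negNorm (-γ/ε) (fun u => yh₁ u - yh₂ u)) * Real.exp ((γf/ε)*t)) *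
            (Real.exp (((-(γf+γ))/ε)*t)/((-(γf+γ))/ε)))) := by
          refine mul_le_mul_of_nonneg_left
            (mul_le_mul_of_nonneg_left ?_ (by positivity)) (Real.exp_pos _).le
          rw [← hval]
          exact hb
      _ = (-(K/(γ+γf))) * (negNorm (-γ/ε) (fun u => xh₁ u - xh₂ u) +
            negNorm (-γ/ε) (fun u => yh₁ u - yh₂ u)) := by
          have h2 : γ + γf ≠ 0 := ne_of_lt hγγf
          have key2 : ∀ (a b KN : ℝ), a ≠ 0 → b ≠ 0 →
              a * ((1/ε) * ((KN * b) * ((b⁻¹ * a⁻¹)/((-(γf+γ))/ε)))) = -(KN/(γ+γf)) := by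
            intros a b KN ha hb
            calc a * ((1/ε) * ((KN * b) * ((b⁻¹ * a⁻¹)/((-(γf+γ))/ε))))
                = (a*a⁻¹) * (b*b⁻¹) * (KN * ((1/ε)/((-(γf+γ))/ε))) := by ring
              _ = KN * ((1/ε)/((-(γf+γ))/ε)) := by
                  rw [mul_inv_cancel₀ ha, mul_inv_cancel₀ hb, one_mul, one_mul]
              _ = -(KN/(γ+γf)) := by
                  rw [div_div_eq_mul_div, one_div_mul_cancel hεne,
                    show (-(γf+γ)) = -(γ+γf) by ring, div_neg]
                  ring
          rw [show (((-(γf+γ))/ε)*t) = -((γf/ε)*t) + -((γ/ε)*t) by field_simp; ring,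
            Real.exp_add, Real.exp_neg, Real.exp_neg]
          exact (key2 _ _ _ (Real.exp_ne_zero _) (Real.exp_ne_zero _)).trans (by ring)
  refine le_trans (add_le_add hslow hfast) (le_of_eq ?_)
  ring
end
end

section
/- If in addition ρ(ε) < 1, then for every x₀ ∈ E₁ the operator I^ε_{x₀} has a unique fixed point (x̂^ε, ŷ^ε) ∈ C_β^−(E₁ × E₂); equivalently, the integral system x̂(t) = exp(tS)x₀ + ∫₀^t exp((t−s)S) ĝ₁(s, x̂(s), ŷ(s)) ds and ŷ(t) = (1/ε)∫_{−∞}^t exp(((t−s)/ε)F) ĝ₂(s, x̂(s), ŷ(s)) ds, for t ≤ 0, has exactly one solution in C_β^−(E₁ × E₂); this solution satisfies x̂^ε(0) = x₀. -/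
set_option synthInstance.maxHeartbeats 1000000
set_option maxHeartbeats 2000000
set_option linter.unusedSectionVars false
set_option linter.unusedVariables false
open scoped ENNReal NNReal


open MeasureTheory Real Filter

noncomputable section

variable {E₁ E₂ : Type*}
  [NormedAddCommGroup E₁] [NormedSpace ℝ E₁]
  [NormedAddCommGroup E₂] [NormedSpace ℝ E₂]

section AuxHelpers
open intervalIntegral Set

lemma integral_exp_mul (c a b : ℝ) (hc : c ≠ 0) :
    ∫ s in a..b, Real.exp (c * s) = (Real.exp (c * b) - Real.exp (c * a)) / c := by
  rw [intervalIntegral.integral_comp_mul_left (fun x => Real.exp x) hc, integral_exp, smul_eq_mul]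
  field_simp

variable {E E' : Type*} [NormedAddCommGroup E] [NormedSpace ℝ E]
  [NormedAddCommGroup E'] [NormedSpace ℝ E']

lemma apply_stronglyMeasurable (A : ℝ → (E →L[ℝ] E')) (hA : Continuous A)
    {h : ℝ → E} (hm : StronglyMeasurable h) :
    StronglyMeasurable fun s => A s (h s) := by
  have hcont : Continuous fun p : (E →L[ℝ] E') × E => p.1 p.2 :=
    isBoundedBilinearMap_apply.continuous
  exact hcont.comp_stronglyMeasurable (hA.stronglyMeasurable.prodMk hm)

lemma expA_cont [CompleteSpace E] (S : E →L[ℝ] E) {φ : ℝ → ℝ} (hφ : Continuous φ) :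
    Continuous fun s => NormedSpace.exp (φ s • S) := by
  let +nondep : NormedAlgebra ℚ (E →L[ℝ] E) := .restrictScalars ℚ ℝ _
  exact NormedSpace.exp_continuous.comp (hφ.smul continuous_const)

section Est

variable [CompleteSpace E]

/-- Slow estimate. -/
lemma est_slow (S : E →L[ℝ] E) {γs β : ℝ} (hβγ : β < γs)
    (hS : ∀ t ≤ (0:ℝ), ∀ x : E, ‖NormedSpace.exp (t • S) x‖ ≤ Real.exp (γs * t) * ‖x‖)
    {h : ℝ → E} (hm : StronglyMeasurable h) {D : ℝ} (hD : 0 ≤ D)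
    (hb : ∀ s ≤ (0:ℝ), ‖h s‖ ≤ D * Real.exp (β * s)) {t : ℝ} (ht : t ≤ 0) :
    ‖∫ s in (0:ℝ)..t, NormedSpace.exp ((t - s) • S) (h s)‖ ≤
      D / (γs - β) * Real.exp (β * t) := by
  have hc : β - γs ≠ 0 := by linarith
  set f := fun s => NormedSpace.exp ((t - s) • S) (h s) with hf
  set g := fun s => D * Real.exp (γs * t) * Real.exp ((β - γs) * s) with hg
  have hfm : StronglyMeasurable f :=
    apply_stronglyMeasurable _ (expA_cont S (continuous_const.sub continuous_id)) hm
  have hgi : IntervalIntegrable g volume t 0 := by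
    apply Continuous.intervalIntegrable
    exact continuous_const.mul (Real.continuous_exp.comp (continuous_const.mul continuous_id))
  have hbound : ∀ s ∈ Set.uIoc t 0, ‖f s‖ ≤ g s := by
    intro s hs
    rw [Set.uIoc_of_le ht] at hs
    have hs0 : s ≤ 0 := hs.2
    have hts : t - s ≤ 0 := by linarith [hs.1]
    calc ‖f s‖ ≤ Real.exp (γs * (t - s)) * ‖h s‖ := hS _ hts _
      _ ≤ Real.exp (γs * (t - s)) * (D * Real.exp (β * s)) := by
          exact mul_le_mul_of_nonneg_left (hb s hs0) (Real.exp_pos _).le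
      _ = D * (Real.exp (γs * (t - s)) * Real.exp (β * s)) := by ring
      _ = D * Real.exp (γs * (t - s) + β * s) := by rw [Real.exp_add]
      _ = D * Real.exp (γs * t + (β - γs) * s) := by ring_nf
      _ = D * (Real.exp (γs * t) * Real.exp ((β - γs) * s)) := by rw [Real.exp_add]
      _ = g s := by rw [hg]; ring
  rw [intervalIntegral.integral_symm, norm_neg]
  have h1 : ‖∫ s in t..0, f s‖ ≤ |∫ s in t..0, g s| := by
    refine (intervalIntegral.norm_integral_le_of_norm_le (g := g) ht ?_ hgi).trans (le_abs_self _)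
    exact Filter.Eventually.of_forall fun s hs => hbound s (by rwa [Set.uIoc_of_le ht])
  have key : Real.exp (γs * t) * Real.exp ((β - γs) * t) = Real.exp (β * t) := by
    rw [← Real.exp_add]; congr 1; ring
  have h2 : (∫ s in t..0, g s) = D * (Real.exp (β * t) - Real.exp (γs * t)) / (γs - β) := by
    rw [hg]
    rw [intervalIntegral.integral_const_mul, integral_exp_mul _ _ _ hc]
    rw [mul_zero, Real.exp_zero]
    have hne1 : β - γs ≠ 0 := hc
    have hne2 : γs - β ≠ 0 := by linarith
    rw [← key]
    field_simp
    ring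
  have hab : Real.exp (γs * t) ≤ Real.exp (β * t) :=
    Real.exp_le_exp.2 (by nlinarith)
  have h3 : (0:ℝ) ≤ D * (Real.exp (β * t) - Real.exp (γs * t)) / (γs - β) :=
    div_nonneg (by nlinarith) (by linarith)
  rw [h2, abs_of_nonneg h3] at h1
  refine h1.trans ?_
  rw [div_mul_eq_mul_div, div_le_div_iff_of_pos_right (by linarith : (0:ℝ) < γs - β)]
  nlinarith [Real.exp_pos (γs * t), Real.exp_pos (β * t)]

/-- Fast integrability. -/
lemma est_fast_int (F : E →L[ℝ] E) {γf β ε : ℝ} (hε : 0 < ε) (hc : 0 < β - γf / ε)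
    (hF : ∀ t ≥ (0:ℝ), ∀ y : E, ‖NormedSpace.exp (t • F) y‖ ≤ Real.exp (γf * t) * ‖y‖)
    {h : ℝ → E} (hm : StronglyMeasurable h) {D : ℝ} (hD : 0 ≤ D)
    (hb : ∀ s ≤ (0:ℝ), ‖h s‖ ≤ D * Real.exp (β * s)) {t : ℝ} (ht : t ≤ 0) :
    IntegrableOn (fun s => NormedSpace.exp (((t - s)/ε) • F) (h s)) (Set.Iic t) ∧
    ‖∫ s in Set.Iic t, NormedSpace.exp (((t - s)/ε) • F) (h s)‖ ≤
      D * Real.exp (β * t) / (β - γf / ε) := by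
  set f := fun s => NormedSpace.exp (((t - s)/ε) • F) (h s) with hf
  set g := fun s => D * Real.exp ((γf/ε) * t) * Real.exp ((β - γf/ε) * s) with hg
  have hfm : StronglyMeasurable f :=
    apply_stronglyMeasurable _ (expA_cont F ((continuous_const.sub continuous_id).div_const ε)) hm
  have hgi : IntegrableOn g (Set.Iic t) :=
    (integrableOn_exp_mul_Iic hc t).const_mul _
  have hbound : ∀ s ≤ t, ‖f s‖ ≤ g s := by
    intro s hs
    have hts : (t - s)/ε ≥ 0 := div_nonneg (by linarith) hε.le
    calc ‖f s‖ ≤ Real.exp (γf * ((t - s)/ε)) * ‖h s‖ := hF _ hts _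
      _ ≤ Real.exp (γf * ((t - s)/ε)) * (D * Real.exp (β * s)) :=
          mul_le_mul_of_nonneg_left (hb s (hs.trans ht)) (Real.exp_pos _).le
      _ = D * (Real.exp (γf * ((t - s)/ε)) * Real.exp (β * s)) := by ring
      _ = D * Real.exp (γf * ((t - s)/ε) + β * s) := by rw [Real.exp_add]
      _ = D * Real.exp (γf/ε * t + (β - γf/ε) * s) := by
          congr 1; field_simp; ring
      _ = D * (Real.exp (γf/ε * t) * Real.exp ((β - γf/ε) * s)) := by rw [Real.exp_add]
      _ = g s := by rw [hg]; ring
  have haebound : ∀ᵐ s ∂(volume.restrict (Set.Iic t)), ‖f s‖ ≤ g s := by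
    rw [ae_restrict_iff' measurableSet_Iic]
    exact Filter.Eventually.of_forall hbound
  have hint : IntegrableOn f (Set.Iic t) :=
    Integrable.mono' hgi hfm.aestronglyMeasurable.restrict haebound
  refine ⟨hint, ?_⟩
  have h1 : ‖∫ s in Set.Iic t, f s‖ ≤ ∫ s in Set.Iic t, g s :=
    norm_integral_le_of_norm_le hgi haebound
  refine h1.trans ?_
  have key2 : Real.exp (γf/ε * t) * Real.exp ((β - γf/ε) * t) = Real.exp (β * t) := by
    rw [← Real.exp_add]; congr 1; ring
  apply le_of_eq
  rw [hg, MeasureTheory.integral_const_mul, integral_exp_mul_Iic hc t]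
  rw [← key2]
  ring
end Est

section Cont
variable [CompleteSpace E]

lemma exp_smul_split (S : E →L[ℝ] E) (a b : ℝ) (v : E) :
    NormedSpace.exp ((a + b) • S) v =
      NormedSpace.exp (a • S) (NormedSpace.exp (b • S) v) := by
  have hc : Commute (a • S) (b • S) := (Commute.refl S).smul_left a |>.smul_right b
  let +nondep : NormedAlgebra ℚ (E →L[ℝ] E) := .restrictScalars ℚ ℝ _
  rw [add_smul, NormedSpace.exp_add_of_commute hc, ContinuousLinearMap.mul_apply]

lemma aux_intervalIntegrable (A : ℝ → (E →L[ℝ] E')) (hA : Continuous A)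
    {h : ℝ → E} (hm : StronglyMeasurable h)
    (hb : ∀ r : ℝ, ∃ M, ∀ t : ℝ, |t| ≤ r → ‖h t‖ ≤ M) (a b : ℝ) :
    IntervalIntegrable (fun s => A s (h s)) volume a b := by
  obtain ⟨M, hM⟩ := hb (max |a| |b|)
  obtain ⟨C, hC⟩ := (isCompact_uIcc (a := a) (b := b)).exists_bound_of_continuousOn
    (hA.continuousOn (s := Set.uIcc a b))
  refine (_root_.intervalIntegrable_const (c := (max C 0) * (max M 0))).mono_fun
    (apply_stronglyMeasurable A hA hm).aestronglyMeasurable ?_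
  refine (ae_restrict_iff' measurableSet_uIoc).mpr (Filter.Eventually.of_forall fun s hs => ?_)
  have hs' : s ∈ Set.uIcc a b := Set.uIoc_subset_uIcc hs
  have h1 : ‖A s (h s)‖ ≤ ‖A s‖ * ‖h s‖ := (A s).le_opNorm _
  have h2 : ‖h s‖ ≤ max M 0 := by
    refine le_max_of_le_left (hM s ?_)
    rcases Set.mem_uIcc.1 hs' with ⟨h3,h4⟩|⟨h3,h4⟩ <;> rw [abs_le] <;>
      constructor <;> [skip; skip; skip; skip] <;>
      [exact le_trans (neg_le_neg (le_max_left _ _)) (neg_abs_le a |>.trans h3);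
       exact h4.trans ((le_abs_self b).trans (le_max_right _ _));
       exact le_trans (neg_le_neg (le_max_right _ _)) (neg_abs_le b |>.trans h3);
       exact h4.trans ((le_abs_self a).trans (le_max_left _ _))]
  calc ‖A s (h s)‖ ≤ ‖A s‖ * ‖h s‖ := h1
    _ ≤ (max C 0) * (max M 0) :=
        mul_le_mul (le_max_of_le_left (hC s hs')) h2 (norm_nonneg _) (le_max_right _ _)
    _ ≤ ‖(max C 0) * (max M 0)‖ := le_abs_self _

lemma slow_factor (S : E →L[ℝ] E) {h : ℝ → E} (hm : StronglyMeasurable h)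
    (hb : ∀ r : ℝ, ∃ M, ∀ t : ℝ, |t| ≤ r → ‖h t‖ ≤ M) (t : ℝ) :
    (∫ s in (0:ℝ)..t, NormedSpace.exp ((t - s) • S) (h s)) =
      NormedSpace.exp (t • S) (∫ s in (0:ℝ)..t, NormedSpace.exp ((-s) • S) (h s)) := by
  have hint := aux_intervalIntegrable (fun s => NormedSpace.exp ((-s) • S))
    (expA_cont S continuous_neg) hm hb 0 t
  rw [← ContinuousLinearMap.intervalIntegral_comp_comm _ hint]
  refine intervalIntegral.integral_congr fun s _ => ?_
  rw [show t - s = t + (-s) by ring, exp_smul_split]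

lemma slow_cont (S : E →L[ℝ] E) (x0 : E) {h : ℝ → E} (hm : StronglyMeasurable h)
    (hb : ∀ r : ℝ, ∃ M, ∀ t : ℝ, |t| ≤ r → ‖h t‖ ≤ M) :
    Continuous fun t => NormedSpace.exp (t • S) x0 +
      ∫ s in (0:ℝ)..t, NormedSpace.exp ((t - s) • S) (h s) := by
  have h1 : Continuous fun t : ℝ => NormedSpace.exp (t • S) := expA_cont S continuous_id
  have h2 : Continuous fun t : ℝ => ∫ s in (0:ℝ)..t, NormedSpace.exp ((-s) • S) (h s) :=
    intervalIntegral.continuous_primitive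
      (fun a b => aux_intervalIntegrable _ (expA_cont S continuous_neg) hm hb a b) 0
  have heq : (fun t => NormedSpace.exp (t • S) x0 +
      ∫ s in (0:ℝ)..t, NormedSpace.exp ((t - s) • S) (h s)) =
      fun t => NormedSpace.exp (t • S)
        (x0 + ∫ s in (0:ℝ)..t, NormedSpace.exp ((-s) • S) (h s)) := by
    funext t
    rw [map_add, slow_factor S hm hb t]
  rw [heq]
  exact isBoundedBilinearMap_apply.continuous.comp
    (h1.prodMk (continuous_const.add h2))

lemma fast_factor (F : E →L[ℝ] E) {γf β ε : ℝ} (hε : 0 < ε) (hc : 0 < β - γf / ε)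
    (hF : ∀ t ≥ (0:ℝ), ∀ y : E, ‖NormedSpace.exp (t • F) y‖ ≤ Real.exp (γf * t) * ‖y‖)
    {h : ℝ → E} (hm : StronglyMeasurable h) {D : ℝ} (hD : 0 ≤ D)
    (hb : ∀ s ≤ (0:ℝ), ‖h s‖ ≤ D * Real.exp (β * s)) {t : ℝ} (ht : t ≤ 0) :
    (∫ s in Set.Iic t, NormedSpace.exp (((t - s)/ε) • F) (h s)) =
      NormedSpace.exp ((t/ε) • F)
        (∫ s in Set.Iic t, NormedSpace.exp (((-s)/ε) • F) (h s)) := by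
  have hint0 : IntegrableOn (fun s => NormedSpace.exp (((0 - s)/ε) • F) (h s)) (Set.Iic (0:ℝ)) :=
    (est_fast_int F hε hc hF hm hD hb le_rfl).1
  have hint : IntegrableOn (fun s => NormedSpace.exp (((-s)/ε) • F) (h s)) (Set.Iic t) := by
    simp only [zero_sub] at hint0
    exact hint0.mono_set (Set.Iic_subset_Iic.2 ht)
  rw [← ContinuousLinearMap.integral_comp_comm _ hint]
  refine setIntegral_congr_fun measurableSet_Iic fun s _ => ?_
  rw [show (t - s)/ε = t/ε + (-s)/ε by ring, exp_smul_split]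

lemma fast_cont (F : E →L[ℝ] E) {γf β ε : ℝ} (hε : 0 < ε) (hc : 0 < β - γf / ε)
    (hF : ∀ t ≥ (0:ℝ), ∀ y : E, ‖NormedSpace.exp (t • F) y‖ ≤ Real.exp (γf * t) * ‖y‖)
    {h : ℝ → E} (hm : StronglyMeasurable h) {D : ℝ} (hD : 0 ≤ D)
    (hb : ∀ s ≤ (0:ℝ), ‖h s‖ ≤ D * Real.exp (β * s))
    (hloc : ∀ r : ℝ, ∃ M, ∀ t : ℝ, |t| ≤ r → ‖h t‖ ≤ M) :
    ContinuousOn (fun t => (1/ε) •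
      ∫ s in Set.Iic t, NormedSpace.exp (((t - s)/ε) • F) (h s)) (Set.Iic (0:ℝ)) := by
  set ψ := fun s => NormedSpace.exp (((-s)/ε) • F) (h s) with hψ
  have hψc : Continuous fun s : ℝ => ((-s)/ε) :=
    (continuous_neg.div_const ε)
  have hψii : ∀ a b : ℝ, IntervalIntegrable ψ volume a b :=
    fun a b => aux_intervalIntegrable _ (expA_cont F hψc) hm hloc a b
  have hint0 : IntegrableOn ψ (Set.Iic (0:ℝ)) := by
    have := (est_fast_int F hε hc hF hm hD hb le_rfl).1
    simp only [zero_sub] at this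
    exact this.congr_fun (fun s _ => by simp [hψ, neg_div]) measurableSet_Iic
  have hR : ∀ t ≤ (0:ℝ), (∫ s in Set.Iic t, ψ s) =
      (∫ s in Set.Iic (0:ℝ), ψ s) + ∫ s in (0:ℝ)..t, ψ s := by
    intro t ht
    have h1 := integral_Iic_sub_Iic (hint0.mono_set (Set.Iic_subset_Iic.2 ht)) hint0
    rw [intervalIntegral.integral_symm t 0]
    rw [← h1]
    abel
  have hcont : Continuous fun t => (1/ε) • (NormedSpace.exp ((t/ε) • F)
      ((∫ s in Set.Iic (0:ℝ), ψ s) + ∫ s in (0:ℝ)..t, ψ s)) := by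
    refine Continuous.const_smul ?_ _
    refine isBoundedBilinearMap_apply.continuous.comp
      ((expA_cont F (continuous_id.div_const ε)).prodMk
        (continuous_const.add (intervalIntegral.continuous_primitive hψii 0)))
  refine hcont.continuousOn.congr fun t ht => ?_
  have ht' : t ≤ (0:ℝ) := ht
  rw [fast_factor F hε hc hF hm hD hb ht']
  rw [show (∫ s in Set.Iic t, NormedSpace.exp (((-s)/ε) • F) (h s)) = ∫ s in Set.Iic t, ψ s
      from rfl, hR t ht']

end Cont

end AuxHelpers

section AuxHelpers2
open intervalIntegral Set
variable {E₁ E₂ E₃ : Type*}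
  [NormedAddCommGroup E₁] [NormedSpace ℝ E₁] [FiniteDimensional ℝ E₁] [MeasurableSpace E₁] [BorelSpace E₁]
  [NormedAddCommGroup E₂] [NormedSpace ℝ E₂] [FiniteDimensional ℝ E₂] [MeasurableSpace E₂] [BorelSpace E₂]
  [NormedAddCommGroup E₃] [NormedSpace ℝ E₃] [FiniteDimensional ℝ E₃] [MeasurableSpace E₃] [BorelSpace E₃]



lemma g_comp_measurable {K : ℝ} (g : ℝ → E₁ → E₂ → E₃)
    (hgm : ∀ x y, Measurable fun t => g t x y)
    (hgl : ∀ t x₁ y₁ x₂ y₂, ‖g t x₁ y₁ - g t x₂ y₂‖ ≤ K * (‖x₁ - x₂‖ + ‖y₁ - y₂‖))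
    {x : ℝ → E₁} {y : ℝ → E₂} (hx : Continuous x) (hy : Continuous y) :
    StronglyMeasurable fun t => g t (x t) (y t) := by
  have hK : ∀ t, Continuous fun p : E₁ × E₂ => g t p.1 p.2 := by
    intro t
    rw [Metric.continuous_iff]
    intro p δ hδ
    rcases le_or_gt K 0 with hK0 | hK0
    · refine ⟨1, one_pos, fun q _ => ?_⟩
      have := hgl t q.1 q.2 p.1 p.2
      have h2 : K * (‖q.1 - p.1‖ + ‖q.2 - p.2‖) ≤ 0 :=
        mul_nonpos_of_nonpos_of_nonneg hK0 (by positivity)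
      rw [dist_eq_norm]
      linarith
    · refine ⟨δ / (2 * K + 1), by positivity, fun q hq => ?_⟩
      rw [dist_eq_norm]
      have h1 := hgl t q.1 q.2 p.1 p.2
      have h2 : ‖q.1 - p.1‖ ≤ dist q p := by rw [dist_eq_norm] at *; exact (norm_fst_le (q - p)).trans le_rfl
      have h3 : ‖q.2 - p.2‖ ≤ dist q p := (norm_snd_le (q - p)).trans_eq (dist_eq_norm q p).symm
      have : K * (‖q.1 - p.1‖ + ‖q.2 - p.2‖) ≤ K * (2 * dist q p) := by
        refine mul_le_mul_of_nonneg_left (by linarith) hK0.le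
      have h4 : dist q p < δ / (2 * K + 1) := hq
      have h5' : dist q p * (2 * K + 1) < δ := (lt_div_iff₀ (by positivity)).1 hq
      have h5 : (2 * K) * dist q p < δ := by nlinarith [dist_nonneg (x := q) (y := p)]
      linarith
  have hu : Measurable (Function.uncurry fun (p : E₁ × E₂) (t : ℝ) => g t p.1 p.2) :=
    measurable_uncurry_of_continuous_of_measurable
      (fun t => hK t) (fun p => hgm p.1 p.2)
  have : Measurable fun t => g t (x t) (y t) := by
    have hc : Measurable fun t : ℝ => ((x t, y t), t) :=
      ((hx.measurable.prodMk hy.measurable).prodMk measurable_id)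
    exact hu.comp hc
  exact this.stronglyMeasurable

end AuxHelpers2

section AuxHelpers3
open intervalIntegral Set
variable {E₁ E₂ : Type*}
  [NormedAddCommGroup E₁] [NormedSpace ℝ E₁]
  [NormedAddCommGroup E₂] [NormedSpace ℝ E₂]




instance fact_one_le_one_ennreal' : Fact ((1:ℝ≥0∞) ≤ 1) := ⟨le_rfl⟩


lemma Gnorm_eq (f : WithLp 1 (E₁ × E₂)) : ‖f‖ = ‖f.fst‖ + ‖f.snd‖ := by
  rw [WithLp.prod_norm_eq_add (by norm_num)]
  norm_num

lemma Gnorm_fst_le (f : WithLp 1 (E₁ × E₂)) : ‖f.fst‖ ≤ ‖f‖ := by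
  rw [Gnorm_eq]; linarith [norm_nonneg f.snd]

lemma Gnorm_snd_le (f : WithLp 1 (E₁ × E₂)) : ‖f.snd‖ ≤ ‖f‖ := by
  rw [Gnorm_eq]; linarith [norm_nonneg f.fst]

/-- Reconstruction of the slow component from a weighted bounded continuous function. -/
def reconX (β : ℝ) (w : BoundedContinuousFunction (Set.Iic (0:ℝ)) (WithLp 1 (E₁ × E₂))) :
    ℝ → E₁ :=
  fun t => Real.exp (β * min t 0) • (w ⟨min t 0, Set.mem_Iic.mpr (min_le_right t 0)⟩).fst

/-- Reconstruction of the fast component. -/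
def reconY (β : ℝ) (w : BoundedContinuousFunction (Set.Iic (0:ℝ)) (WithLp 1 (E₁ × E₂))) :
    ℝ → E₂ :=
  fun t => Real.exp (β * min t 0) • (w ⟨min t 0, Set.mem_Iic.mpr (min_le_right t 0)⟩).snd

lemma contMin : Continuous fun t : ℝ => (⟨min t 0, Set.mem_Iic.mpr (min_le_right t 0)⟩ :
    Set.Iic (0:ℝ)) :=
  Continuous.subtype_mk (continuous_id.min continuous_const) _

lemma cont_fstG : Continuous fun f : WithLp 1 (E₁ × E₂) => f.fst :=
  continuous_fst.comp (WithLp.prod_continuous_ofLp 1 E₁ E₂)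

lemma cont_sndG : Continuous fun f : WithLp 1 (E₁ × E₂) => f.snd :=
  continuous_snd.comp (WithLp.prod_continuous_ofLp 1 E₁ E₂)

lemma reconX_cont (β : ℝ) (w : BoundedContinuousFunction (Set.Iic (0:ℝ)) (WithLp 1 (E₁ × E₂))) :
    Continuous (reconX β w) := by
  apply Continuous.smul
  · exact Real.continuous_exp.comp (continuous_const.mul (continuous_id.min continuous_const))
  · exact cont_fstG.comp (w.continuous.comp contMin)

lemma reconY_cont (β : ℝ) (w : BoundedContinuousFunction (Set.Iic (0:ℝ)) (WithLp 1 (E₁ × E₂))) :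
    Continuous (reconY β w) := by
  apply Continuous.smul
  · exact Real.continuous_exp.comp (continuous_const.mul (continuous_id.min continuous_const))
  · exact cont_sndG.comp (w.continuous.comp contMin)

lemma reconX_eq (β : ℝ) (w : BoundedContinuousFunction (Set.Iic (0:ℝ)) (WithLp 1 (E₁ × E₂)))
    {t : ℝ} (ht : t ≤ 0) :
    reconX β w t = Real.exp (β * t) • (w ⟨t, Set.mem_Iic.mpr ht⟩).fst := by
  unfold reconX
  congr 2 <;> simp [min_eq_left ht]

lemma reconY_eq (β : ℝ) (w : BoundedContinuousFunction (Set.Iic (0:ℝ)) (WithLp 1 (E₁ × E₂)))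
    {t : ℝ} (ht : t ≤ 0) :
    reconY β w t = Real.exp (β * t) • (w ⟨t, Set.mem_Iic.mpr ht⟩).snd := by
  unfold reconY
  congr 2 <;> simp [min_eq_left ht]

lemma recon_norm (β : ℝ) (w : BoundedContinuousFunction (Set.Iic (0:ℝ)) (WithLp 1 (E₁ × E₂)))
    {t : ℝ} (ht : t ≤ 0) :
    ‖reconX β w t‖ + ‖reconY β w t‖ ≤ Real.exp (β * t) * ‖w‖ := by
  rw [reconX_eq β w ht, reconY_eq β w ht, norm_smul, norm_smul,
    Real.norm_eq_abs, abs_of_pos (Real.exp_pos _), ← mul_add]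
  refine mul_le_mul_of_nonneg_left ?_ (Real.exp_pos _).le
  rw [← Gnorm_eq]
  exact w.norm_coe_le_norm _

lemma recon_sub_norm (β : ℝ)
    (w w' : BoundedContinuousFunction (Set.Iic (0:ℝ)) (WithLp 1 (E₁ × E₂)))
    {t : ℝ} (ht : t ≤ 0) :
    ‖reconX β w t - reconX β w' t‖ + ‖reconY β w t - reconY β w' t‖ ≤
      Real.exp (β * t) * ‖w - w'‖ := by
  rw [reconX_eq β w ht, reconX_eq β w' ht, reconY_eq β w ht, reconY_eq β w' ht,
    ← smul_sub, ← smul_sub, norm_smul, norm_smul,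
    Real.norm_eq_abs, abs_of_pos (Real.exp_pos _), ← mul_add]
  refine mul_le_mul_of_nonneg_left ?_ (Real.exp_pos _).le
  have h1 : (w - w') ⟨t, Set.mem_Iic.mpr ht⟩ =
      w ⟨t, Set.mem_Iic.mpr ht⟩ - w' ⟨t, Set.mem_Iic.mpr ht⟩ := rfl
  calc ‖(w ⟨t, _⟩).fst - (w' ⟨t, _⟩).fst‖ + ‖(w ⟨t, _⟩).snd - (w' ⟨t, _⟩).snd‖
      = ‖((w - w') ⟨t, Set.mem_Iic.mpr ht⟩)‖ := by
        rw [Gnorm_eq, h1]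
        rfl
    _ ≤ ‖w - w'‖ := (w - w').norm_coe_le_norm _

lemma recon_loc_bound (β : ℝ)
    (w : BoundedContinuousFunction (Set.Iic (0:ℝ)) (WithLp 1 (E₁ × E₂))) (r : ℝ) :
    ∀ t : ℝ, |t| ≤ r → ‖reconX β w t‖ + ‖reconY β w t‖ ≤ Real.exp (|β| * r) * ‖w‖ := by
  intro t htr
  have h1 : ‖reconX β w t‖ + ‖reconY β w t‖ ≤ Real.exp (β * min t 0) * ‖w‖ := by
    unfold reconX reconY
    rw [norm_smul, norm_smul, Real.norm_eq_abs, abs_of_pos (Real.exp_pos _), ← mul_add]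
    refine mul_le_mul_of_nonneg_left ?_ (Real.exp_pos _).le
    rw [← Gnorm_eq]
    exact w.norm_coe_le_norm _
  refine h1.trans (mul_le_mul_of_nonneg_right (Real.exp_le_exp.2 ?_) (norm_nonneg _))
  have h2 : |min t 0| ≤ |t| := by
    rcases le_or_gt t 0 with h | h
    · rw [min_eq_left h]
    · rw [min_eq_right h.le]; simp [abs_nonneg]
  calc β * min t 0 ≤ |β * min t 0| := le_abs_self _
    _ = |β| * |min t 0| := abs_mul _ _
    _ ≤ |β| * r := mul_le_mul_of_nonneg_left (h2.trans htr) (abs_nonneg _)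

lemma Gnorm_symm_pair (a : E₁) (b : E₂) :
    ‖(WithLp.equiv 1 (E₁ × E₂)).symm (a, b)‖ = ‖a‖ + ‖b‖ :=
  Gnorm_eq _

lemma exp_smul_cancel {E : Type*} [NormedAddCommGroup E] [NormedSpace ℝ E] (a : ℝ) (v : E) :
    Real.exp a • Real.exp (-a) • v = v := by
  rw [smul_smul, ← Real.exp_add, add_neg_cancel, Real.exp_zero, one_smul]

lemma LPslow_def (S : E₁ →L[ℝ] E₁) (g1 : ℝ → E₁ → E₂ → E₁) (x0 : E₁)
    (x : ℝ → E₁) (y : ℝ → E₂) (t : ℝ) :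
    LPslow S g1 x0 x y t = NormedSpace.exp (t • S) x0 +
      ∫ s in (0:ℝ)..t, NormedSpace.exp ((t - s) • S) (g1 s (x s) (y s)) := rfl

lemma LPfast_def (F : E₂ →L[ℝ] E₂) (g2 : ℝ → E₁ → E₂ → E₂) (ε : ℝ)
    (x : ℝ → E₁) (y : ℝ → E₂) (t : ℝ) :
    LPfast F g2 ε x y t = (1/ε) •
      ∫ s in Set.Iic t, NormedSpace.exp (((t - s)/ε) • F) (g2 s (x s) (y s)) := rfl

lemma LPslow_congr (S : E₁ →L[ℝ] E₁) (g1 : ℝ → E₁ → E₂ → E₁) (x0 : E₁)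
    {x x' : ℝ → E₁} {y y' : ℝ → E₂}
    (hxy : ∀ s ≤ (0:ℝ), x s = x' s ∧ y s = y' s) {t : ℝ} (ht : t ≤ 0) :
    LPslow S g1 x0 x y t = LPslow S g1 x0 x' y' t := by
  rw [LPslow_def, LPslow_def]
  congr 1
  refine intervalIntegral.integral_congr fun s hs => ?_
  rw [Set.uIcc_of_ge ht] at hs
  rw [(hxy s hs.2).1, (hxy s hs.2).2]

lemma LPfast_congr (F : E₂ →L[ℝ] E₂) (g2 : ℝ → E₁ → E₂ → E₂) (ε : ℝ)
    {x x' : ℝ → E₁} {y y' : ℝ → E₂}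
    (hxy : ∀ s ≤ (0:ℝ), x s = x' s ∧ y s = y' s) {t : ℝ} (ht : t ≤ 0) :
    LPfast F g2 ε x y t = LPfast F g2 ε x' y' t := by
  rw [LPfast_def, LPfast_def]
  congr 1
  refine MeasureTheory.setIntegral_congr_fun measurableSet_Iic fun s hs => ?_
  have hs0 : s ≤ 0 := le_trans hs ht
  rw [(hxy s hs0).1, (hxy s hs0).2]

end AuxHelpers3

/-- If `ρ(ε) < 1` then the Lyapunov–Perron operator has a unique fixed
point in `C_β^-`, i.e. the Lyapunov–Perron integral system has exactly one solution in
`C_β^-`, and this solution satisfies `x̂(0) = x₀`. -/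
theorem lyapunovPerron_fixed_point
    {E₁ E₂ : Type*}
    [NormedAddCommGroup E₁] [NormedSpace ℝ E₁] [FiniteDimensional ℝ E₁] [MeasurableSpace E₁] [BorelSpace E₁]
    [NormedAddCommGroup E₂] [NormedSpace ℝ E₂] [FiniteDimensional ℝ E₂] [MeasurableSpace E₂] [BorelSpace E₂]
    (S : E₁ →L[ℝ] E₁) (F : E₂ →L[ℝ] E₂)
    (γs γf γ K ε : ℝ)
    (hγs : 0 < γs) (hγf : γf < 0) (hγ : 0 < γ) (hK : 0 < K)
    (hgap : K < -(γ + γf)) (hε : 0 < ε)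
    (hS : ∀ t ≤ (0:ℝ), ∀ x : E₁, ‖NormedSpace.exp (t • S) x‖ ≤ Real.exp (γs * t) * ‖x‖)
    (hF : ∀ t ≥ (0:ℝ), ∀ y : E₂, ‖NormedSpace.exp (t • F) y‖ ≤ Real.exp (γf * t) * ‖y‖)
    (g1 : ℝ → E₁ → E₂ → E₁) (g2 : ℝ → E₁ → E₂ → E₂)
    (hg1m : ∀ x y, Measurable fun t => g1 t x y)
    (hg2m : ∀ x y, Measurable fun t => g2 t x y)
    (hg1b : ∀ x y r, ∃ M, ∀ t : ℝ, |t| ≤ r → ‖g1 t x y‖ ≤ M)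
    (hg2b : ∀ x y r, ∃ M, ∀ t : ℝ, |t| ≤ r → ‖g2 t x y‖ ≤ M)
    (hg1l : ∀ t x₁ y₁ x₂ y₂, ‖g1 t x₁ y₁ - g1 t x₂ y₂‖ ≤ K * (‖x₁ - x₂‖ + ‖y₁ - y₂‖))
    (hg2l : ∀ t x₁ y₁ x₂ y₂, ‖g2 t x₁ y₁ - g2 t x₂ y₂‖ ≤ K * (‖x₁ - x₂‖ + ‖y₁ - y₂‖))
    (hg0 : ∃ M, ∀ t ≤ (0:ℝ),
      Real.exp ((γ/ε) * t) * (‖g1 t 0 0‖ + ‖g2 t 0 0‖) ≤ M)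
    (hρ : (ε * K / (γ + ε * γs) - K / (γ + γf)) < 1) :
    ∀ x0 : E₁, ∃ (xh : ℝ → E₁) (yh : ℝ → E₂),
      (MemCneg (-γ/ε) xh ∧ MemCneg (-γ/ε) yh) ∧
      (∀ t ≤ (0:ℝ), xh t = LPslow S g1 x0 xh yh t ∧ yh t = LPfast F g2 ε xh yh t) ∧
      xh 0 = x0 ∧
      (∀ (xh' : ℝ → E₁) (yh' : ℝ → E₂),
        (MemCneg (-γ/ε) xh' ∧ MemCneg (-γ/ε) yh') →
        (∀ t ≤ (0:ℝ), xh' t = LPslow S g1 x0 xh' yh' t ∧ yh' t = LPfast F g2 ε xh' yh' t) →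
        ∀ t ≤ (0:ℝ), xh' t = xh t ∧ yh' t = yh t) := by
  intro x0
  set β : ℝ := -γ/ε with hβdef
  have hεne : ε ≠ 0 := hε.ne'
  have hβneg : β < 0 := by
    rw [hβdef, neg_div]; linarith [div_pos hγ hε]
  have hβγs : β < γs := hβneg.trans hγs
  have hsb : (0:ℝ) < γs - β := by linarith
  have hγγf : γ + γf < -K := by linarith
  have hγγfneg : γ + γf < 0 := by linarith
  have hcf : (0:ℝ) < β - γf/ε := by
    have h1 : β - γf/ε = (-γ - γf)/ε := by rw [hβdef]; ring
    rw [h1]; exact div_pos (by linarith) hε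
  have hcfne : β - γf/ε ≠ 0 := hcf.ne'
  have hden1 : (0:ℝ) < γ + ε * γs := by positivity
  have hρpos : (0:ℝ) < ε * K / (γ + ε * γs) - K / (γ + γf) := by
    have h1 : (0:ℝ) < ε * K / (γ + ε * γs) := div_pos (by positivity) hden1
    have h2 : K / (γ + γf) < 0 := div_neg_of_pos_of_neg hK hγγfneg
    linarith
  have hsplit1 : K / (γs - β) = ε * K / (γ + ε * γs) := by
    rw [hβdef, show γs - -γ/ε = (γ + ε*γs)/ε by field_simp; ring, div_div_eq_mul_div,
      mul_comm]
  have hsplit2 : K / (ε * (β - γf/ε)) = -(K / (γ + γf)) := by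
    have h2 : ε * (β - γf/ε) = -(γ + γf) := by rw [hβdef]; field_simp; ring
    rw [h2, div_neg]
  obtain ⟨M, hM⟩ := hg0
  have hM0 : (0:ℝ) ≤ M := le_trans (by positivity) (hM 0 le_rfl)
  have hg10 : ∀ s ≤ (0:ℝ), ‖g1 s 0 0‖ ≤ M * Real.exp (β * s) := by
    intro s hs
    have h1 := hM s hs
    have h2 : (0:ℝ) < Real.exp ((γ/ε) * s) := Real.exp_pos _
    have h3 : Real.exp (β * s) = (Real.exp ((γ/ε) * s))⁻¹ := by
      rw [← Real.exp_neg]; congr 1; rw [hβdef]; ring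
    rw [h3, ← div_eq_mul_inv, le_div_iff₀ h2]
    nlinarith [mul_nonneg h2.le (norm_nonneg (g2 s 0 0))]
  have hg20 : ∀ s ≤ (0:ℝ), ‖g2 s 0 0‖ ≤ M * Real.exp (β * s) := by
    intro s hs
    have h1 := hM s hs
    have h2 : (0:ℝ) < Real.exp ((γ/ε) * s) := Real.exp_pos _
    have h3 : Real.exp (β * s) = (Real.exp ((γ/ε) * s))⁻¹ := by
      rw [← Real.exp_neg]; congr 1; rw [hβdef]; ring
    rw [h3, ← div_eq_mul_inv, le_div_iff₀ h2]
    nlinarith [mul_nonneg h2.le (norm_nonneg (g1 s 0 0))]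
  -- per-w facts
  have hgm1 : ∀ w : BoundedContinuousFunction (Set.Iic (0:ℝ)) (WithLp 1 (E₁ × E₂)),
      StronglyMeasurable fun s => g1 s (reconX β w s) (reconY β w s) :=
    fun w => g_comp_measurable g1 hg1m hg1l (reconX_cont β w) (reconY_cont β w)
  have hgm2 : ∀ w : BoundedContinuousFunction (Set.Iic (0:ℝ)) (WithLp 1 (E₁ × E₂)),
      StronglyMeasurable fun s => g2 s (reconX β w s) (reconY β w s) :=
    fun w => g_comp_measurable g2 hg2m hg2l (reconX_cont β w) (reconY_cont β w)
  have hloc1 : ∀ w : BoundedContinuousFunction (Set.Iic (0:ℝ)) (WithLp 1 (E₁ × E₂)),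
      ∀ r : ℝ, ∃ Mr : ℝ, ∀ s : ℝ, |s| ≤ r →
      ‖g1 s (reconX β w s) (reconY β w s)‖ ≤ Mr := by
    intro w r
    obtain ⟨M0, hM0'⟩ := hg1b 0 0 r
    refine ⟨M0 + K * (Real.exp (|β| * r) * ‖w‖), fun s hsr => ?_⟩
    have h1 := hg1l s (reconX β w s) (reconY β w s) 0 0
    rw [sub_zero, sub_zero] at h1
    have h2 := recon_loc_bound β w r s hsr
    have h3 := hM0' s hsr
    have h4 := mul_le_mul_of_nonneg_left h2 hK.le
    calc ‖g1 s (reconX β w s) (reconY β w s)‖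
        = ‖(g1 s (reconX β w s) (reconY β w s) - g1 s 0 0) + g1 s 0 0‖ := by
          rw [sub_add_cancel]
      _ ≤ ‖g1 s (reconX β w s) (reconY β w s) - g1 s 0 0‖ + ‖g1 s 0 0‖ := norm_add_le _ _
      _ ≤ M0 + K * (Real.exp (|β| * r) * ‖w‖) := by linarith
  have hloc2 : ∀ w : BoundedContinuousFunction (Set.Iic (0:ℝ)) (WithLp 1 (E₁ × E₂)),
      ∀ r : ℝ, ∃ Mr : ℝ, ∀ s : ℝ, |s| ≤ r →
      ‖g2 s (reconX β w s) (reconY β w s)‖ ≤ Mr := by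
    intro w r
    obtain ⟨M0, hM0'⟩ := hg2b 0 0 r
    refine ⟨M0 + K * (Real.exp (|β| * r) * ‖w‖), fun s hsr => ?_⟩
    have h1 := hg2l s (reconX β w s) (reconY β w s) 0 0
    rw [sub_zero, sub_zero] at h1
    have h2 := recon_loc_bound β w r s hsr
    have h3 := hM0' s hsr
    have h4 := mul_le_mul_of_nonneg_left h2 hK.le
    calc ‖g2 s (reconX β w s) (reconY β w s)‖
        = ‖(g2 s (reconX β w s) (reconY β w s) - g2 s 0 0) + g2 s 0 0‖ := by
          rw [sub_add_cancel]
      _ ≤ ‖g2 s (reconX β w s) (reconY β w s) - g2 s 0 0‖ + ‖g2 s 0 0‖ := norm_add_le _ _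
      _ ≤ M0 + K * (Real.exp (|β| * r) * ‖w‖) := by linarith
  have hexp1 : ∀ w : BoundedContinuousFunction (Set.Iic (0:ℝ)) (WithLp 1 (E₁ × E₂)),
      ∀ s ≤ (0:ℝ), ‖g1 s (reconX β w s) (reconY β w s)‖ ≤ (M + K * ‖w‖) * Real.exp (β * s) := by
    intro w s hs
    have h1 := hg1l s (reconX β w s) (reconY β w s) 0 0
    rw [sub_zero, sub_zero] at h1
    have h2 := mul_le_mul_of_nonneg_left (recon_norm β w hs) hK.le
    have h3 := hg10 s hs
    calc ‖g1 s (reconX β w s) (reconY β w s)‖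
        = ‖(g1 s (reconX β w s) (reconY β w s) - g1 s 0 0) + g1 s 0 0‖ := by
          rw [sub_add_cancel]
      _ ≤ ‖g1 s (reconX β w s) (reconY β w s) - g1 s 0 0‖ + ‖g1 s 0 0‖ := norm_add_le _ _
      _ ≤ K * (Real.exp (β * s) * ‖w‖) + M * Real.exp (β * s) := by linarith
      _ = (M + K * ‖w‖) * Real.exp (β * s) := by ring
  have hexp2 : ∀ w : BoundedContinuousFunction (Set.Iic (0:ℝ)) (WithLp 1 (E₁ × E₂)),
      ∀ s ≤ (0:ℝ), ‖g2 s (reconX β w s) (reconY β w s)‖ ≤ (M + K * ‖w‖) * Real.exp (β * s) := by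
    intro w s hs
    have h1 := hg2l s (reconX β w s) (reconY β w s) 0 0
    rw [sub_zero, sub_zero] at h1
    have h2 := mul_le_mul_of_nonneg_left (recon_norm β w hs) hK.le
    have h3 := hg20 s hs
    calc ‖g2 s (reconX β w s) (reconY β w s)‖
        = ‖(g2 s (reconX β w s) (reconY β w s) - g2 s 0 0) + g2 s 0 0‖ := by
          rw [sub_add_cancel]
      _ ≤ ‖g2 s (reconX β w s) (reconY β w s) - g2 s 0 0‖ + ‖g2 s 0 0‖ := norm_add_le _ _
      _ ≤ K * (Real.exp (β * s) * ‖w‖) + M * Real.exp (β * s) := by linarith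
      _ = (M + K * ‖w‖) * Real.exp (β * s) := by ring
  have hDnn : ∀ w : BoundedContinuousFunction (Set.Iic (0:ℝ)) (WithLp 1 (E₁ × E₂)),
      (0:ℝ) ≤ M + K * ‖w‖ :=
    fun w => add_nonneg hM0 (mul_nonneg hK.le (norm_nonneg _))
  -- the operator
  have hTex : ∀ w : BoundedContinuousFunction (Set.Iic (0:ℝ)) (WithLp 1 (E₁ × E₂)),
      ∃ Tw : BoundedContinuousFunction (Set.Iic (0:ℝ)) (WithLp 1 (E₁ × E₂)),
      ∀ τ : Set.Iic (0:ℝ),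
      Tw τ = (WithLp.equiv 1 (E₁ × E₂)).symm
        (Real.exp (-β * τ.1) • LPslow S g1 x0 (reconX β w) (reconY β w) τ.1,
         Real.exp (-β * τ.1) • LPfast F g2 ε (reconX β w) (reconY β w) τ.1) := by
    intro w
    have hD := hDnn w
    have hslowc : Continuous fun t => LPslow S g1 x0 (reconX β w) (reconY β w) t :=
      slow_cont S x0 (hgm1 w) (hloc1 w)
    have hfastc : ContinuousOn (fun t => LPfast F g2 ε (reconX β w) (reconY β w) t)
        (Set.Iic 0) :=
      fast_cont F hε hcf hF (hgm2 w) hD (hexp2 w) (hloc2 w)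
    have hcont : Continuous fun τ : Set.Iic (0:ℝ) => (WithLp.equiv 1 (E₁ × E₂)).symm
        (Real.exp (-β * τ.1) • LPslow S g1 x0 (reconX β w) (reconY β w) τ.1,
         Real.exp (-β * τ.1) • LPfast F g2 ε (reconX β w) (reconY β w) τ.1) := by
      refine Continuous.comp (WithLp.prod_continuous_toLp 1 E₁ E₂) ?_
      refine Continuous.prodMk ?_ ?_
      · exact (Real.continuous_exp.comp (continuous_const.mul continuous_subtype_val)).smul
          (hslowc.comp continuous_subtype_val)
      · exact (Real.continuous_exp.comp (continuous_const.mul continuous_subtype_val)).smul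
          hfastc.restrict
    refine ⟨BoundedContinuousFunction.ofNormedAddCommGroup _ hcont
      (‖x0‖ + (M + K * ‖w‖)/(γs - β) + (M + K * ‖w‖)/(ε * (β - γf/ε))) ?_, fun τ => rfl⟩
    rintro ⟨t, ht⟩
    have ht' : t ≤ (0:ℝ) := ht
    have hee : Real.exp (-β*t) * Real.exp (β*t) = 1 := by
      rw [← Real.exp_add, neg_mul, neg_add_cancel, Real.exp_zero]
    have hexp0 : (0:ℝ) < Real.exp (-β*t) := Real.exp_pos _
    have hslow : ‖LPslow S g1 x0 (reconX β w) (reconY β w) t‖ ≤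
        Real.exp (γs * t) * ‖x0‖ + (M + K * ‖w‖)/(γs - β) * Real.exp (β*t) := by
      rw [LPslow_def]
      exact (norm_add_le _ _).trans (add_le_add (hS t ht' x0)
        (est_slow S hβγs hS (hgm1 w) hD (hexp1 w) ht'))
    have hfast : ‖LPfast F g2 ε (reconX β w) (reconY β w) t‖ ≤
        (1/ε) * ((M + K * ‖w‖) * Real.exp (β*t) / (β - γf/ε)) := by
      rw [LPfast_def, norm_smul, Real.norm_eq_abs, abs_of_pos (one_div_pos.mpr hε)]
      exact mul_le_mul_of_nonneg_left
        (est_fast_int F hε hcf hF (hgm2 w) hD (hexp2 w) ht').2 (one_div_pos.mpr hε).le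
    show ‖(WithLp.equiv 1 (E₁ × E₂)).symm
        (Real.exp (-β * t) • LPslow S g1 x0 (reconX β w) (reconY β w) t,
         Real.exp (-β * t) • LPfast F g2 ε (reconX β w) (reconY β w) t)‖ ≤ _
    rw [Gnorm_symm_pair, norm_smul, norm_smul, Real.norm_eq_abs, abs_of_pos hexp0]
    have h2 := mul_le_mul_of_nonneg_left hslow hexp0.le
    have h3 : Real.exp (-β*t) * (Real.exp (γs*t) * ‖x0‖) ≤ ‖x0‖ := by
      rw [← mul_assoc, ← Real.exp_add]
      have h4 : Real.exp (-β*t + γs*t) ≤ 1 := Real.exp_le_one_iff.mpr (by nlinarith)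
      nlinarith [norm_nonneg x0]
    have h5 : Real.exp (-β*t) * ((M + K * ‖w‖)/(γs - β) * Real.exp (β*t)) =
        (M + K * ‖w‖)/(γs - β) := by
      calc Real.exp (-β*t) * ((M + K * ‖w‖)/(γs - β) * Real.exp (β*t))
          = (M + K * ‖w‖)/(γs - β) * (Real.exp (-β*t) * Real.exp (β*t)) := by ring
        _ = (M + K * ‖w‖)/(γs - β) := by rw [hee, mul_one]
    have h6 : Real.exp (-β*t) * (Real.exp (γs*t) * ‖x0‖ +
        (M + K * ‖w‖)/(γs - β) * Real.exp (β*t)) =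
        Real.exp (-β*t) * (Real.exp (γs*t) * ‖x0‖) +
        Real.exp (-β*t) * ((M + K * ‖w‖)/(γs - β) * Real.exp (β*t)) := by ring
    have h8 := mul_le_mul_of_nonneg_left hfast hexp0.le
    have h9 : Real.exp (-β*t) * ((1/ε) * ((M + K * ‖w‖) * Real.exp (β*t) / (β - γf/ε))) =
        (M + K * ‖w‖)/(ε * (β - γf/ε)) := by
      calc Real.exp (-β*t) * ((1/ε) * ((M + K * ‖w‖) * Real.exp (β*t) / (β - γf/ε)))
          = (M + K * ‖w‖)/(ε * (β - γf/ε)) * (Real.exp (-β*t) * Real.exp (β*t)) := by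
            field_simp
        _ = (M + K * ‖w‖)/(ε * (β - γf/ε)) := by rw [hee, mul_one]
    linarith
  choose T hT using hTex
  -- contraction
  have hdist : ∀ w w' : BoundedContinuousFunction (Set.Iic (0:ℝ)) (WithLp 1 (E₁ × E₂)),
      dist (T w) (T w') ≤ (ε * K / (γ + ε * γs) - K / (γ + γf)) * dist w w' := by
    intro w w'
    refine (BoundedContinuousFunction.dist_le (mul_nonneg hρpos.le dist_nonneg)).mpr ?_
    rintro ⟨t, ht⟩
    have ht' : t ≤ (0:ℝ) := ht
    rw [hT w ⟨t, ht⟩, hT w' ⟨t, ht⟩, dist_eq_norm]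
    have hsymm_sub : ∀ (a a' : E₁) (b b' : E₂),
        (WithLp.equiv 1 (E₁ × E₂)).symm (a, b) - (WithLp.equiv 1 (E₁ × E₂)).symm (a', b') =
          (WithLp.equiv 1 (E₁ × E₂)).symm (a - a', b - b') := fun _ _ _ _ => rfl
    rw [hsymm_sub, Gnorm_symm_pair, ← smul_sub, ← smul_sub, norm_smul, norm_smul,
      Real.norm_eq_abs, abs_of_pos (Real.exp_pos _)]
    have hee : Real.exp (-β*t) * Real.exp (β*t) = 1 := by
      rw [← Real.exp_add, neg_mul, neg_add_cancel, Real.exp_zero]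
    have hDpos : (0:ℝ) ≤ K * dist w w' := mul_nonneg hK.le dist_nonneg
    have hΔm1 : StronglyMeasurable fun s => g1 s (reconX β w s) (reconY β w s) -
        g1 s (reconX β w' s) (reconY β w' s) := (hgm1 w).sub (hgm1 w')
    have hΔm2 : StronglyMeasurable fun s => g2 s (reconX β w s) (reconY β w s) -
        g2 s (reconX β w' s) (reconY β w' s) := (hgm2 w).sub (hgm2 w')
    have hΔb1 : ∀ s ≤ (0:ℝ), ‖g1 s (reconX β w s) (reconY β w s) -
        g1 s (reconX β w' s) (reconY β w' s)‖ ≤ (K * dist w w') * Real.exp (β*s) := by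
      intro s hs
      refine (hg1l s _ _ _ _).trans ?_
      have h3 := mul_le_mul_of_nonneg_left (recon_sub_norm β w w' hs) hK.le
      rw [dist_eq_norm]
      calc K * (‖reconX β w s - reconX β w' s‖ + ‖reconY β w s - reconY β w' s‖)
          ≤ K * (Real.exp (β*s) * ‖w - w'‖) := h3
        _ = (K * ‖w - w'‖) * Real.exp (β*s) := by ring
    have hΔb2 : ∀ s ≤ (0:ℝ), ‖g2 s (reconX β w s) (reconY β w s) -
        g2 s (reconX β w' s) (reconY β w' s)‖ ≤ (K * dist w w') * Real.exp (β*s) := by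
      intro s hs
      refine (hg2l s _ _ _ _).trans ?_
      have h3 := mul_le_mul_of_nonneg_left (recon_sub_norm β w w' hs) hK.le
      rw [dist_eq_norm]
      calc K * (‖reconX β w s - reconX β w' s‖ + ‖reconY β w s - reconY β w' s‖)
          ≤ K * (Real.exp (β*s) * ‖w - w'‖) := h3
        _ = (K * ‖w - w'‖) * Real.exp (β*s) := by ring
    have i1 := aux_intervalIntegrable (fun s => NormedSpace.exp ((t - s) • S))
      (expA_cont S (continuous_const.sub continuous_id)) (hgm1 w) (hloc1 w) 0 t
    have i2 := aux_intervalIntegrable (fun s => NormedSpace.exp ((t - s) • S))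
      (expA_cont S (continuous_const.sub continuous_id)) (hgm1 w') (hloc1 w') 0 t
    have hslowsub : LPslow S g1 x0 (reconX β w) (reconY β w) t -
        LPslow S g1 x0 (reconX β w') (reconY β w') t =
        ∫ s in (0:ℝ)..t, NormedSpace.exp ((t - s) • S)
          (g1 s (reconX β w s) (reconY β w s) - g1 s (reconX β w' s) (reconY β w' s)) := by
      rw [LPslow_def, LPslow_def]
      have h4 := intervalIntegral.integral_sub i1 i2
      calc (NormedSpace.exp (t • S) x0 + ∫ s in (0:ℝ)..t, NormedSpace.exp ((t - s) • S)
              (g1 s (reconX β w s) (reconY β w s))) -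
            (NormedSpace.exp (t • S) x0 + ∫ s in (0:ℝ)..t, NormedSpace.exp ((t - s) • S)
              (g1 s (reconX β w' s) (reconY β w' s))) =
          (∫ s in (0:ℝ)..t, NormedSpace.exp ((t - s) • S)
              (g1 s (reconX β w s) (reconY β w s))) -
            ∫ s in (0:ℝ)..t, NormedSpace.exp ((t - s) • S)
              (g1 s (reconX β w' s) (reconY β w' s)) := by abel
        _ = ∫ s in (0:ℝ)..t, (NormedSpace.exp ((t - s) • S)
              (g1 s (reconX β w s) (reconY β w s)) - NormedSpace.exp ((t - s) • S)
              (g1 s (reconX β w' s) (reconY β w' s))) := h4.symm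
        _ = _ := intervalIntegral.integral_congr fun s _ => (map_sub _ _ _).symm
    have hslowest : ‖LPslow S g1 x0 (reconX β w) (reconY β w) t -
        LPslow S g1 x0 (reconX β w') (reconY β w') t‖ ≤
        (K * dist w w')/(γs - β) * Real.exp (β*t) := by
      rw [hslowsub]
      exact est_slow S hβγs hS hΔm1 hDpos hΔb1 ht'
    have j1 := (est_fast_int F hε hcf hF (hgm2 w) (hDnn w) (hexp2 w) ht').1
    have j2 := (est_fast_int F hε hcf hF (hgm2 w') (hDnn w') (hexp2 w') ht').1
    have hfastsub : LPfast F g2 ε (reconX β w) (reconY β w) t -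
        LPfast F g2 ε (reconX β w') (reconY β w') t =
        (1/ε) • ∫ s in Set.Iic t, NormedSpace.exp (((t - s)/ε) • F)
          (g2 s (reconX β w s) (reconY β w s) - g2 s (reconX β w' s) (reconY β w' s)) := by
      rw [LPfast_def, LPfast_def, ← smul_sub]
      congr 1
      rw [← MeasureTheory.integral_sub j1 j2]
      exact MeasureTheory.setIntegral_congr_fun measurableSet_Iic
        fun s _ => (map_sub _ _ _).symm
    have hfastest : ‖LPfast F g2 ε (reconX β w) (reconY β w) t -
        LPfast F g2 ε (reconX β w') (reconY β w') t‖ ≤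
        (1/ε) * ((K * dist w w') * Real.exp (β*t) / (β - γf/ε)) := by
      rw [hfastsub, norm_smul, Real.norm_eq_abs, abs_of_pos (one_div_pos.mpr hε)]
      exact mul_le_mul_of_nonneg_left
        (est_fast_int F hε hcf hF hΔm2 hDpos hΔb2 ht').2 (one_div_pos.mpr hε).le
    have hgen : ∀ c : ℝ, Real.exp (-β*t) * (c * Real.exp (β*t)) = c := by
      intro c
      calc Real.exp (-β*t) * (c * Real.exp (β*t)) =
          c * (Real.exp (-β*t) * Real.exp (β*t)) := by ring
        _ = c := by rw [hee, mul_one]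
    calc Real.exp (-β*t) * ‖LPslow S g1 x0 (reconX β w) (reconY β w) t -
          LPslow S g1 x0 (reconX β w') (reconY β w') t‖ +
        Real.exp (-β*t) * ‖LPfast F g2 ε (reconX β w) (reconY β w) t -
          LPfast F g2 ε (reconX β w') (reconY β w') t‖
        ≤ Real.exp (-β*t) * ((K * dist w w')/(γs - β) * Real.exp (β*t)) +
          Real.exp (-β*t) * ((1/ε) * ((K * dist w w') * Real.exp (β*t) / (β - γf/ε))) :=
          add_le_add (mul_le_mul_of_nonneg_left hslowest (Real.exp_pos _).le)
            (mul_le_mul_of_nonneg_left hfastest (Real.exp_pos _).le)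
      _ = (K/(γs - β) + K/(ε * (β - γf/ε))) * dist w w' := by
          have e1 := hgen ((K * dist w w')/(γs - β))
          have e2 : Real.exp (-β*t) * ((1/ε) * ((K * dist w w') * Real.exp (β*t) / (β - γf/ε)))
              = (K * dist w w')/(ε * (β - γf/ε)) := by
            rw [show (1/ε) * ((K * dist w w') * Real.exp (β*t) / (β - γf/ε)) =
                ((K * dist w w')/(ε * (β - γf/ε))) * Real.exp (β*t) by
              field_simp]
            exact hgen _
          rw [e1, e2]
          ring
      _ = (ε * K / (γ + ε * γs) - K / (γ + γf)) * dist w w' := by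
          rw [hsplit1, hsplit2]
          ring
  have hρnnlt : (⟨ε * K / (γ + ε * γs) - K / (γ + γf), hρpos.le⟩ : ℝ≥0) < 1 := by
    exact hρ
  have hcontr : ContractingWith ⟨ε * K / (γ + ε * γs) - K / (γ + γf), hρpos.le⟩ T :=
    ⟨hρnnlt, LipschitzWith.of_dist_le_mul fun w w' => hdist w w'⟩
  haveI : Nonempty (BoundedContinuousFunction (Set.Iic (0:ℝ)) (WithLp 1 (E₁ × E₂))) := ⟨0⟩
  set wst := ContractingWith.fixedPoint T hcontr with hwst
  have hfix : T wst = wst := hcontr.fixedPoint_isFixedPt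
  -- fixed point equations
  have hfixeqs : ∀ t ≤ (0:ℝ),
      reconX β wst t = LPslow S g1 x0 (reconX β wst) (reconY β wst) t ∧
      reconY β wst t = LPfast F g2 ε (reconX β wst) (reconY β wst) t := by
    intro t ht'
    have hw : T wst ⟨t, Set.mem_Iic.mpr ht'⟩ = wst ⟨t, Set.mem_Iic.mpr ht'⟩ := by
      rw [hfix]
    rw [hT wst ⟨t, Set.mem_Iic.mpr ht'⟩] at hw
    constructor
    · have h1 : (wst ⟨t, Set.mem_Iic.mpr ht'⟩).fst =
          Real.exp (-β*t) • LPslow S g1 x0 (reconX β wst) (reconY β wst) t := by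
        rw [← hw]; exact rfl
      rw [reconX_eq β wst ht', h1, show Real.exp (-β*t) = Real.exp (-(β*t)) by ring_nf,
        exp_smul_cancel]
    · have h1 : (wst ⟨t, Set.mem_Iic.mpr ht'⟩).snd =
          Real.exp (-β*t) • LPfast F g2 ε (reconX β wst) (reconY β wst) t := by
        rw [← hw]; exact rfl
      rw [reconY_eq β wst ht', h1, show Real.exp (-β*t) = Real.exp (-(β*t)) by ring_nf,
        exp_smul_cancel]
  have h00 : reconX β wst 0 = x0 := by
    rw [(hfixeqs 0 le_rfl).1, LPslow_def, intervalIntegral.integral_same, add_zero,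
      zero_smul, NormedSpace.exp_zero, ContinuousLinearMap.one_apply]
  refine ⟨reconX β wst, reconY β wst, ⟨⟨(reconX_cont β wst).continuousOn, ?_⟩,
    (reconY_cont β wst).continuousOn, ?_⟩, hfixeqs, h00, ?_⟩
  · refine ⟨‖wst‖, fun z hz => ?_⟩
    obtain ⟨⟨t, ht⟩, rfl⟩ := hz
    have ht' : t ≤ (0:ℝ) := ht
    show Real.exp (-β * t) * ‖reconX β wst t‖ ≤ ‖wst‖
    rw [reconX_eq β wst ht', norm_smul, Real.norm_eq_abs, abs_of_pos (Real.exp_pos _),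
      ← mul_assoc, ← Real.exp_add, neg_mul, neg_add_cancel, Real.exp_zero, one_mul]
    exact le_trans (Gnorm_fst_le _) (wst.norm_coe_le_norm _)
  · refine ⟨‖wst‖, fun z hz => ?_⟩
    obtain ⟨⟨t, ht⟩, rfl⟩ := hz
    have ht' : t ≤ (0:ℝ) := ht
    show Real.exp (-β * t) * ‖reconY β wst t‖ ≤ ‖wst‖
    rw [reconY_eq β wst ht', norm_smul, Real.norm_eq_abs, abs_of_pos (Real.exp_pos _),
      ← mul_assoc, ← Real.exp_add, neg_mul, neg_add_cancel, Real.exp_zero, one_mul]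
    exact le_trans (Gnorm_snd_le _) (wst.norm_coe_le_norm _)
  · rintro xh' yh' ⟨⟨hx'c, hx'b⟩, hy'c, hy'b⟩ hfix'
    have hcontw' : Continuous fun τ : Set.Iic (0:ℝ) => (WithLp.equiv 1 (E₁ × E₂)).symm
        (Real.exp (-β * τ.1) • xh' τ.1, Real.exp (-β * τ.1) • yh' τ.1) := by
      refine Continuous.comp (WithLp.prod_continuous_toLp 1 E₁ E₂) ?_
      refine Continuous.prodMk ?_ ?_
      · exact (Real.continuous_exp.comp (continuous_const.mul continuous_subtype_val)).smul
          hx'c.restrict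
      · exact (Real.continuous_exp.comp (continuous_const.mul continuous_subtype_val)).smul
          hy'c.restrict
    obtain ⟨C₁, hC₁⟩ := hx'b
    obtain ⟨C₂, hC₂⟩ := hy'b
    set w' : BoundedContinuousFunction (Set.Iic (0:ℝ)) (WithLp 1 (E₁ × E₂)) :=
      BoundedContinuousFunction.ofNormedAddCommGroup _ hcontw' (C₁ + C₂) (by
        rintro ⟨t, ht⟩
        have ht' : t ≤ (0:ℝ) := ht
        show ‖(WithLp.equiv 1 (E₁ × E₂)).symm
          (Real.exp (-β * t) • xh' t, Real.exp (-β * t) • yh' t)‖ ≤ C₁ + C₂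
        rw [Gnorm_symm_pair, norm_smul, norm_smul, Real.norm_eq_abs,
          abs_of_pos (Real.exp_pos _)]
        have h1 : Real.exp (-β * t) * ‖xh' t‖ ≤ C₁ := hC₁ ⟨⟨t, ht⟩, rfl⟩
        have h2 : Real.exp (-β * t) * ‖yh' t‖ ≤ C₂ := hC₂ ⟨⟨t, ht⟩, rfl⟩
        linarith) with hw'def
    have hreconw' : ∀ s ≤ (0:ℝ), reconX β w' s = xh' s ∧ reconY β w' s = yh' s := by
      intro s hs
      constructor
      · rw [reconX_eq β w' hs]
        have h1 : (w' ⟨s, Set.mem_Iic.mpr hs⟩).fst = Real.exp (-β*s) • xh' s := rfl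
        rw [h1, show Real.exp (-β*s) = Real.exp (-(β*s)) by ring_nf, exp_smul_cancel]
      · rw [reconY_eq β w' hs]
        have h1 : (w' ⟨s, Set.mem_Iic.mpr hs⟩).snd = Real.exp (-β*s) • yh' s := rfl
        rw [h1, show Real.exp (-β*s) = Real.exp (-(β*s)) by ring_nf, exp_smul_cancel]
    have hfixw' : T w' = w' := by
      apply BoundedContinuousFunction.ext
      rintro ⟨t, ht⟩
      have ht' : t ≤ (0:ℝ) := ht
      rw [hT w' ⟨t, ht⟩]
      have hLs : LPslow S g1 x0 (reconX β w') (reconY β w') t = xh' t :=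
        (LPslow_congr S g1 x0 hreconw' ht').trans ((hfix' t ht').1).symm
      have hLf : LPfast F g2 ε (reconX β w') (reconY β w') t = yh' t :=
        (LPfast_congr F g2 ε hreconw' ht').trans ((hfix' t ht').2).symm
      rw [hLs, hLf]
      rfl
    have hw'eq : w' = wst := by
      rw [hwst]
      exact hcontr.fixedPoint_unique hfixw'
    intro t ht'
    constructor
    · rw [← (hreconw' t ht').1, hw'eq]
    · rw [← (hreconw' t ht').2, hw'eq]
end
end
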